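/- arXiv:1111.3388 — 4 statements merged into one kernel-verified Lean document; each statement's English description precedes it below -/
import Mathlib

section
/- Let α>0 with α≠1, s<0, t>0, set D = A_{α,s,t}, and suppose a = (a₁,a₂) ∈ D and f_k = (u_k,v_k): Δ → D is a sequence of harmonic maps with f_k(0) → a and ‖df_k(0)‖ → ∞ as k → ∞. Then for every c ∈ ℝ: (i) there exists K ∈ ℕ such that c ∈ u_k(Δ) for all k ≥ K; and (ii) for every ε>0 there exists K ∈ ℕ such that for all k ≥ K there is a point z ∈ Δ with |z| < ε and u_k(z) = c. -/
open Complex Metric Set Filter Topology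

/-- The base domain `A_{α,s,t}`: `x₂ > t·x₁^α` for `x₁ > 0`, `x₂ > 0` for `x₁ = 0`,
and `x₂ > s·(-x₁)^α` for `x₁ < 0`. -/
def setA (α s t : ℝ) : Set (ℝ × ℝ) :=
  {x | (0 < x.1 → t * x.1 ^ α < x.2) ∧ (x.1 = 0 → 0 < x.2) ∧
       (x.1 < 0 → s * (-x.1) ^ α < x.2)}

/-- The Laplacian of `u : ℂ → ℝ`, as the sum of the second directional derivatives
in the directions `1` and `I`. -/
noncomputable def laplacian (u : ℂ → ℝ) (z : ℂ) : ℝ :=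
  fderiv ℝ (fun w => fderiv ℝ u w 1) z 1 +
    fderiv ℝ (fun w => fderiv ℝ u w Complex.I) z Complex.I

/-- A real-valued function is harmonic on a set if it is `C²` there and its
Laplacian vanishes there. -/
def HarmonicOn (u : ℂ → ℝ) (s : Set ℂ) : Prop :=
  ContDiffOn ℝ 2 u s ∧ ∀ z ∈ s, laplacian u z = 0

/-- A map `f = (u, v) : ℂ → ℝ²` is a harmonic map on a set if both components
are harmonic there. -/
def HarmonicMapOn (f : ℂ → ℝ × ℝ) (s : Set ℂ) : Prop :=
  HarmonicOn (fun z => (f z).1) s ∧ HarmonicOn (fun z => (f z).2) s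

/-- gradient function `u_x - i u_y` -/
noncomputable def hgrad (u : ℂ → ℝ) (z : ℂ) : ℂ :=
  (fderiv ℝ u z 1 : ℝ) - (fderiv ℝ u z Complex.I : ℝ) * Complex.I

/-- a real-linear map on ℂ is determined by values at 1, I -/
lemma clm_apply_basis {F : Type*} [NormedAddCommGroup F] [NormedSpace ℝ F]
    (L : ℂ →L[ℝ] F) (w : ℂ) : L w = w.re • L 1 + w.im • L Complex.I := by
  conv_lhs => rw [← Complex.re_add_im w]
  rw [show (↑w.re + ↑w.im * Complex.I : ℂ) = w.re • (1:ℂ) + w.im • Complex.I by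
    simp [Complex.real_smul]]
  rw [map_add, map_smul, map_smul]

lemma holo_hgrad {u : ℂ → ℝ} (h2 : ContDiffOn ℝ 2 u (ball 0 1))
    (hlap : ∀ z ∈ ball (0:ℂ) 1, laplacian u z = 0) :
    ∀ z ∈ ball (0:ℂ) 1, DifferentiableAt ℂ (hgrad u) z := by
  intro z hz
  have hball : IsOpen (ball (0:ℂ) 1) := isOpen_ball
  have hmem : ball (0:ℂ) 1 ∈ 𝓝 z := hball.mem_nhds hz
  have hu1 : ContDiffOn ℝ 1 (fderiv ℝ u) (ball 0 1) :=
    h2.fderiv_of_isOpen hball (by norm_num)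
  have hdiff : DifferentiableAt ℝ (fderiv ℝ u) z :=
    ((hu1.contDiffAt hmem).differentiableAt one_ne_zero)
  set A := fderiv ℝ (fderiv ℝ u) z with hA
  have hAfd : HasFDerivAt (fderiv ℝ u) A z := hdiff.hasFDerivAt
  have hsymm : A 1 Complex.I = A Complex.I 1 := by
    have := (h2.contDiffAt hmem).isSymmSndFDerivAt (by norm_num)
    exact this 1 Complex.I
  -- laplacian gives A 1 1 + A I I = 0
  have h1 : HasFDerivAt (fun w => fderiv ℝ u w 1)
      ((ContinuousLinearMap.apply ℝ ℝ (1:ℂ)).comp A) z :=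
    (ContinuousLinearMap.apply ℝ ℝ (1:ℂ)).hasFDerivAt.comp z hAfd
  have hI : HasFDerivAt (fun w => fderiv ℝ u w Complex.I)
      ((ContinuousLinearMap.apply ℝ ℝ (Complex.I)).comp A) z :=
    (ContinuousLinearMap.apply ℝ ℝ (Complex.I)).hasFDerivAt.comp z hAfd
  have hlapz : A 1 1 + A Complex.I Complex.I = 0 := by
    have := hlap z hz
    rw [laplacian] at this
    rw [h1.fderiv, hI.fderiv] at this
    simpa using this
  -- g is real-differentiable at z with derivative L
  have h1' : HasFDerivAt (fun w => ((fderiv ℝ u w 1 : ℝ) : ℂ))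
      (Complex.ofRealCLM.comp ((ContinuousLinearMap.apply ℝ ℝ (1:ℂ)).comp A)) z :=
    Complex.ofRealCLM.hasFDerivAt.comp z h1
  have hI' : HasFDerivAt (fun w => ((fderiv ℝ u w Complex.I : ℝ) : ℂ))
      (Complex.ofRealCLM.comp ((ContinuousLinearMap.apply ℝ ℝ (Complex.I)).comp A)) z :=
    Complex.ofRealCLM.hasFDerivAt.comp z hI
  have hg : HasFDerivAt (hgrad u)
      ((Complex.ofRealCLM.comp ((ContinuousLinearMap.apply ℝ ℝ (1:ℂ)).comp A)) -
        Complex.I • (Complex.ofRealCLM.comp ((ContinuousLinearMap.apply ℝ ℝ (Complex.I)).comp A))) z := by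
    exact h1'.sub (hI'.mul_const Complex.I)
  set L := (Complex.ofRealCLM.comp ((ContinuousLinearMap.apply ℝ ℝ (1:ℂ)).comp A)) -
        Complex.I • (Complex.ofRealCLM.comp ((ContinuousLinearMap.apply ℝ ℝ (Complex.I)).comp A)) with hL
  have hL1 : L 1 = (A 1 1 : ℝ) - (A 1 Complex.I : ℝ) * Complex.I := by
    simp [hL, ContinuousLinearMap.smul_apply, Complex.real_smul]; ring
  have hLI : L Complex.I = (A Complex.I 1 : ℝ) - (A Complex.I Complex.I : ℝ) * Complex.I := by
    simp [hL, ContinuousLinearMap.smul_apply, Complex.real_smul]; ring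
  -- complex linearity
  have hlin : L Complex.I = Complex.I * L 1 := by
    rw [hL1, hLI]
    apply Complex.ext
    · simp [hsymm]
    · simp only [Complex.sub_im, Complex.mul_im, Complex.mul_re, Complex.ofReal_re,
        Complex.ofReal_im, Complex.I_re, Complex.I_im, Complex.sub_re]
      nlinarith [hlapz]
  -- build complex derivative
  refine HasDerivAt.differentiableAt (f' := L 1) ?_
  rw [hasDerivAt_iff_hasFDerivAt]
  apply hasFDerivAt_of_restrictScalars (𝕜 := ℝ) hg
  ext w
  show w • L 1 = L w
  rw [clm_apply_basis L w]
  rw [show w • L 1 = w * L 1 from rfl]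
  conv_lhs => rw [← Complex.re_add_im w]
  rw [hlin]
  push_cast [Complex.real_smul]
  ring

open intervalIntegral in
lemma exists_primitive {g : ℂ → ℂ} (hg : DifferentiableOn ℂ g (ball 0 1)) :
    ∃ F : ℂ → ℂ, ∀ z ∈ ball (0:ℂ) 1, HasDerivAt F (g z) z := by
  have hgc : ContinuousOn g (ball 0 1) := hg.continuousOn
  have hg' : ContinuousOn (deriv g) (ball 0 1) :=
    ((hg.analyticOnNhd isOpen_ball).deriv).continuousOn
  refine ⟨fun z => ∫ t in (0:ℝ)..1, z * g ((t:ℂ) * z), ?_⟩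
  intro z₀ hz₀
  rw [mem_ball_zero_iff] at hz₀
  set δ : ℝ := (1 - ‖z₀‖)/3 with hδ
  have hδ0 : 0 < δ := by simp only [hδ]; linarith
  set ρ : ℝ := ‖z₀‖ + δ with hρ
  have hρ1 : ρ < 1 := by simp only [hρ, hδ]; linarith
  have hρ0 : 0 ≤ ρ := by positivity
  -- membership facts
  have hmem : ∀ x : ℂ, ‖x‖ ≤ ρ → ∀ t : ℝ, t ∈ Set.Icc (0:ℝ) 1 → (t:ℂ) * x ∈ ball (0:ℂ) 1 ∧
      (t:ℂ) * x ∈ closedBall (0:ℂ) ρ := by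
    intro x hx t ht
    have h1 : ‖(t:ℂ) * x‖ = |t| * ‖x‖ := by
      rw [norm_mul, Complex.norm_real, Real.norm_eq_abs]
    have h2 : |t| ≤ 1 := abs_le.2 ⟨by linarith [ht.1], ht.2⟩
    have h3 : ‖(t:ℂ) * x‖ ≤ ρ := by
      rw [h1]
      calc |t| * ‖x‖ ≤ 1 * ρ := by
            apply mul_le_mul h2 hx (norm_nonneg x) zero_le_one
        _ = ρ := one_mul ρ
    exact ⟨mem_ball_zero_iff.2 (lt_of_le_of_lt h3 hρ1), mem_closedBall_zero_iff.2 h3⟩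
  have hball : ∀ x : ℂ, x ∈ ball z₀ δ → ‖x‖ ≤ ρ := by
    intro x hx
    have := mem_ball_iff_norm.1 hx
    calc ‖x‖ = ‖z₀ + (x - z₀)‖ := by ring_nf
      _ ≤ ‖z₀‖ + ‖x - z₀‖ := norm_add_le _ _
      _ ≤ ρ := by rw [hρ]; linarith
  -- bounds on compact set
  obtain ⟨Cg, hCg⟩ : ∃ C, ∀ x ∈ closedBall (0:ℂ) ρ, ‖g x‖ ≤ C := by
    rcases (isCompact_closedBall (0:ℂ) ρ).exists_bound_of_continuousOn
      (hgc.mono (closedBall_subset_ball hρ1)) with ⟨C, hC⟩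
    exact ⟨C, hC⟩
  obtain ⟨Cg', hCg'⟩ : ∃ C, ∀ x ∈ closedBall (0:ℂ) ρ, ‖deriv g x‖ ≤ C := by
    rcases (isCompact_closedBall (0:ℂ) ρ).exists_bound_of_continuousOn
      (hg'.mono (closedBall_subset_ball hρ1)) with ⟨C, hC⟩
    exact ⟨C, hC⟩
  -- the parametric-integral theorem
  have key := intervalIntegral.hasDerivAt_integral_of_dominated_loc_of_deriv_le
    (F := fun (x : ℂ) (t : ℝ) => x * g ((t:ℂ) * x))
    (F' := fun (x : ℂ) (t : ℝ) => g ((t:ℂ) * x) + x * (deriv g ((t:ℂ) * x) * (t:ℂ)))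
    (x₀ := z₀) (a := (0:ℝ)) (b := 1) (μ := MeasureTheory.volume)
    (s := ball z₀ δ) (bound := fun _ => Cg + ρ * Cg') (ball_mem_nhds z₀ hδ0) ?_ ?_ ?_ ?_ ?_ ?_
  · obtain ⟨-, hkey⟩ := key
    -- compute the integral via FTC
    have hdiff : ∀ t ∈ Set.uIcc (0:ℝ) 1, HasDerivAt (fun s : ℝ => (s:ℂ) * g ((s:ℂ) * z₀))
        (g ((t:ℂ) * z₀) + z₀ * (deriv g ((t:ℂ) * z₀) * (t:ℂ))) t := by
      intro t ht
      rw [Set.uIcc_of_le (by norm_num : (0:ℝ) ≤ 1)] at ht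
      have hmemt := (hmem z₀ (by rw [hρ]; linarith) t ht).1
      have hinner : HasDerivAt (fun w : ℂ => w * z₀) z₀ ((t:ℂ)) := by
        simpa using (hasDerivAt_id ((t:ℂ))).mul_const z₀
      have hgd : HasDerivAt g (deriv g ((t:ℂ) * z₀)) ((t:ℂ) * z₀) :=
        (hg.differentiableAt (isOpen_ball.mem_nhds hmemt)).hasDerivAt
      have hcomp : HasDerivAt (fun w : ℂ => g (w * z₀)) (deriv g ((t:ℂ) * z₀) * z₀) ((t:ℂ)) :=
        HasDerivAt.comp _ hgd hinner
      have hmul : HasDerivAt (fun w : ℂ => w * g (w * z₀))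
          (1 * g ((t:ℂ) * z₀) + (t:ℂ) * (deriv g ((t:ℂ) * z₀) * z₀)) ((t:ℂ)) :=
        (hasDerivAt_id ((t:ℂ))).mul hcomp
      have := hmul.comp_ofReal
      convert this using 1
      ring
    have hcont : ContinuousOn (fun t : ℝ => g ((t:ℂ) * z₀) + z₀ * (deriv g ((t:ℂ) * z₀) * (t:ℂ)))
        (Set.uIcc (0:ℝ) 1) := by
      rw [Set.uIcc_of_le (by norm_num : (0:ℝ) ≤ 1)]
      have hc1 : ContinuousOn (fun t : ℝ => (t:ℂ) * z₀) (Set.Icc 0 1) :=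
        (Complex.continuous_ofReal.continuousOn).mul continuousOn_const
      have hmaps : Set.MapsTo (fun t : ℝ => (t:ℂ) * z₀) (Set.Icc 0 1) (ball (0:ℂ) 1) :=
        fun t ht => (hmem z₀ (by rw [hρ]; linarith) t ht).1
      exact ((hgc.comp hc1 hmaps).add
        (continuousOn_const.mul ((hg'.comp hc1 hmaps).mul
          (Complex.continuous_ofReal.continuousOn))))
    have hint : IntervalIntegrable
        (fun t : ℝ => g ((t:ℂ) * z₀) + z₀ * (deriv g ((t:ℂ) * z₀) * (t:ℂ)))
        MeasureTheory.volume 0 1 := hcont.intervalIntegrable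
    have := intervalIntegral.integral_eq_sub_of_hasDerivAt hdiff hint
    rw [this] at hkey
    simpa using hkey
  · -- hF_meas
    filter_upwards [ball_mem_nhds z₀ hδ0] with x hx
    have hc1 : ContinuousOn (fun t : ℝ => x * g ((t:ℂ) * x)) (Set.Icc 0 1) := by
      have hc : ContinuousOn (fun t : ℝ => (t:ℂ) * x) (Set.Icc 0 1) :=
        (Complex.continuous_ofReal.continuousOn).mul continuousOn_const
      have hmaps : Set.MapsTo (fun t : ℝ => (t:ℂ) * x) (Set.Icc 0 1) (ball (0:ℂ) 1) :=
        fun t ht => (hmem x (hball x hx) t ht).1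
      exact continuousOn_const.mul (hgc.comp hc hmaps)
    exact (hc1.mono (by rw [Set.uIoc_of_le (by norm_num : (0:ℝ) ≤ 1)]; exact Set.Ioc_subset_Icc_self)).aestronglyMeasurable measurableSet_uIoc
  · -- hF_int
    apply ContinuousOn.intervalIntegrable
    rw [Set.uIcc_of_le (by norm_num : (0:ℝ) ≤ 1)]
    have hc : ContinuousOn (fun t : ℝ => (t:ℂ) * z₀) (Set.Icc 0 1) :=
      (Complex.continuous_ofReal.continuousOn).mul continuousOn_const
    have hmaps : Set.MapsTo (fun t : ℝ => (t:ℂ) * z₀) (Set.Icc 0 1) (ball (0:ℂ) 1) :=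
      fun t ht => (hmem z₀ (by rw [hρ]; linarith) t ht).1
    exact continuousOn_const.mul (hgc.comp hc hmaps)
  · -- hF'_meas
    have hc1 : ContinuousOn
        (fun t : ℝ => g ((t:ℂ) * z₀) + z₀ * (deriv g ((t:ℂ) * z₀) * (t:ℂ))) (Set.Icc 0 1) := by
      have hc : ContinuousOn (fun t : ℝ => (t:ℂ) * z₀) (Set.Icc 0 1) :=
        (Complex.continuous_ofReal.continuousOn).mul continuousOn_const
      have hmaps : Set.MapsTo (fun t : ℝ => (t:ℂ) * z₀) (Set.Icc 0 1) (ball (0:ℂ) 1) :=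
        fun t ht => (hmem z₀ (by rw [hρ]; linarith) t ht).1
      exact ((hgc.comp hc hmaps).add
        (continuousOn_const.mul ((hg'.comp hc hmaps).mul
          (Complex.continuous_ofReal.continuousOn))))
    exact (hc1.mono (by rw [Set.uIoc_of_le (by norm_num : (0:ℝ) ≤ 1)]; exact Set.Ioc_subset_Icc_self)).aestronglyMeasurable measurableSet_uIoc
  · -- h_bound
    apply MeasureTheory.ae_of_all
    intro t ht x hx
    rw [Set.uIoc_of_le (by norm_num : (0:ℝ) ≤ 1)] at ht
    have ht' : t ∈ Set.Icc (0:ℝ) 1 := ⟨le_of_lt ht.1, ht.2⟩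
    have hxρ := hball x hx
    have hm := (hmem x hxρ t ht').2
    have h1 : ‖g ((t:ℂ) * x)‖ ≤ Cg := hCg _ hm
    have h2 : ‖deriv g ((t:ℂ) * x)‖ ≤ Cg' := hCg' _ hm
    have ht1 : ‖(t:ℂ)‖ ≤ 1 := by
      rw [Complex.norm_real, Real.norm_eq_abs]
      exact abs_le.2 ⟨by linarith [ht'.1], ht'.2⟩
    calc ‖g ((t:ℂ) * x) + x * (deriv g ((t:ℂ) * x) * (t:ℂ))‖
        ≤ ‖g ((t:ℂ) * x)‖ + ‖x * (deriv g ((t:ℂ) * x) * (t:ℂ))‖ := norm_add_le _ _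
      _ ≤ Cg + ρ * Cg' := by
          have : ‖x * (deriv g ((t:ℂ) * x) * (t:ℂ))‖ ≤ ρ * Cg' := by
            rw [norm_mul, norm_mul]
            have hCg'0 : 0 ≤ Cg' := le_trans (norm_nonneg _) h2
            calc ‖x‖ * (‖deriv g ((t:ℂ) * x)‖ * ‖(t:ℂ)‖)
                ≤ ρ * (Cg' * 1) := by
                  apply mul_le_mul hxρ _ (by positivity) hρ0
                  exact mul_le_mul h2 ht1 (norm_nonneg _) hCg'0
              _ = ρ * Cg' := by ring
          linarith
  · exact intervalIntegrable_const
  · -- h_diff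
    apply MeasureTheory.ae_of_all
    intro t ht x hx
    rw [Set.uIoc_of_le (by norm_num : (0:ℝ) ≤ 1)] at ht
    have ht' : t ∈ Set.Icc (0:ℝ) 1 := ⟨le_of_lt ht.1, ht.2⟩
    have hmemt := (hmem x (hball x hx) t ht').1
    have hinner : HasDerivAt (fun w : ℂ => (t:ℂ) * w) ((t:ℂ)) x := by
      simpa using (hasDerivAt_id x).const_mul ((t:ℂ))
    have hgd : HasDerivAt g (deriv g ((t:ℂ) * x)) ((t:ℂ) * x) :=
      (hg.differentiableAt (isOpen_ball.mem_nhds hmemt)).hasDerivAt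
    have hcomp : HasDerivAt (fun w : ℂ => g ((t:ℂ) * w)) (deriv g ((t:ℂ) * x) * (t:ℂ)) x :=
      HasDerivAt.comp _ hgd hinner
    have := (hasDerivAt_id x).mul hcomp
    simpa [Pi.mul_def] using this

lemma harmonic_rep {u : ℂ → ℝ} (hh : HarmonicOn u (ball 0 1)) :
    ∃ F : ℂ → ℂ, DifferentiableOn ℂ F (ball 0 1) ∧
      (∀ z ∈ ball (0:ℂ) 1, (F z).re = u z) ∧ F 0 = ((u 0 : ℝ) : ℂ) ∧
      ‖fderiv ℝ u 0‖ ≤ ‖deriv F 0‖ := by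
  have h0mem : (0:ℂ) ∈ ball (0:ℂ) 1 := mem_ball_self one_pos
  have hg : ∀ z ∈ ball (0:ℂ) 1, DifferentiableAt ℂ (hgrad u) z := holo_hgrad hh.1 hh.2
  have hgOn : DifferentiableOn ℂ (hgrad u) (ball 0 1) :=
    fun z hz => (hg z hz).differentiableWithinAt
  obtain ⟨F₀, hF₀⟩ := exists_primitive hgOn
  set F : ℂ → ℂ := fun z => F₀ z - F₀ 0 + ((u 0 : ℝ) : ℂ) with hF
  have hFd : ∀ z ∈ ball (0:ℂ) 1, HasDerivAt F (hgrad u z) z := by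
    intro z hz
    exact ((hF₀ z hz).sub_const _).add_const _
  have hF0 : F 0 = ((u 0 : ℝ) : ℂ) := by simp [hF]
  -- directional derivative formula for u
  have hfd : ∀ z ∈ ball (0:ℂ) 1, ∀ w : ℂ, fderiv ℝ u z w = (hgrad u z * w).re := by
    intro z hz w
    rw [clm_apply_basis (fderiv ℝ u z) w]
    simp only [hgrad, smul_eq_mul, Complex.mul_re, Complex.sub_re, Complex.sub_im,
      Complex.ofReal_re, Complex.ofReal_im, Complex.mul_re, Complex.mul_im,
      Complex.I_re, Complex.I_im]
    ring
  have hudiff : ∀ z ∈ ball (0:ℂ) 1, DifferentiableAt ℝ u z := by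
    intro z hz
    exact (hh.1.contDiffAt (isOpen_ball.mem_nhds hz)).differentiableAt (by norm_num)
  -- real part of F equals u
  have hre : ∀ z ∈ ball (0:ℂ) 1, (F z).re = u z := by
    have hfdiff : DifferentiableOn ℝ (fun z => u z - (F z).re) (ball 0 1) := by
      intro z hz
      have h1 : DifferentiableAt ℝ u z := hudiff z hz
      have h2 : DifferentiableAt ℝ (fun z => (F z).re) z :=
        Complex.reCLM.differentiableAt.comp z ((hFd z hz).differentiableAt.restrictScalars ℝ)
      exact (h1.sub h2).differentiableWithinAt
    have hfderiv : ∀ x ∈ ball (0:ℂ) 1,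
        fderivWithin ℝ (fun z => u z - (F z).re) (ball 0 1) x = 0 := by
      intro x hx
      have hF' : HasFDerivAt F ((1 : ℂ →L[ℂ] ℂ).smulRight (hgrad u x)) x :=
        hasDerivAt_iff_hasFDerivAt.1 (hFd x hx)
      have hre' : HasFDerivAt (fun z => (F z).re)
          (Complex.reCLM.comp (((1 : ℂ →L[ℂ] ℂ).smulRight (hgrad u x)).restrictScalars ℝ)) x :=
        Complex.reCLM.hasFDerivAt.comp x (hF'.restrictScalars ℝ)
      have hdiff : HasFDerivAt (fun z => u z - (F z).re) _ x := (hudiff x hx).hasFDerivAt.sub hre'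
      have hzero : fderiv ℝ u x -
          Complex.reCLM.comp (((1 : ℂ →L[ℂ] ℂ).smulRight (hgrad u x)).restrictScalars ℝ) = 0 := by
        ext w
        simp only [ContinuousLinearMap.sub_apply, ContinuousLinearMap.zero_apply,
          ContinuousLinearMap.coe_comp', Function.comp_apply,
          ContinuousLinearMap.coe_restrictScalars', ContinuousLinearMap.smulRight_apply,
          ContinuousLinearMap.one_apply, Complex.reCLM_apply, smul_eq_mul]
        rw [hfd x hx w]
        rw [mul_comm]
        ring
      rw [hzero] at hdiff
      rw [fderivWithin_eq_fderiv (isOpen_ball.uniqueDiffWithinAt hx) hdiff.differentiableAt]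
      exact hdiff.fderiv
    intro z hz
    have := (convex_ball (0:ℂ) 1).is_const_of_fderivWithin_eq_zero hfdiff hfderiv hz h0mem
    have h0 : u 0 - (F 0).re = 0 := by rw [hF0]; simp
    rw [h0] at this
    linarith [this]
  refine ⟨F, fun z hz => ((hFd z hz).differentiableAt).differentiableWithinAt, hre, hF0, ?_⟩
  have hder : deriv F 0 = hgrad u 0 := (hFd 0 h0mem).deriv
  rw [hder]
  apply ContinuousLinearMap.opNorm_le_bound _ (norm_nonneg _)
  intro w
  rw [hfd 0 h0mem w]
  calc ‖(hgrad u 0 * w).re‖ ≤ ‖hgrad u 0 * w‖ := by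
        rw [Real.norm_eq_abs]; exact Complex.abs_re_le_norm _
    _ = ‖hgrad u 0‖ * ‖w‖ := by rw [norm_mul]


lemma halfplane_est {r b : ℝ} {G : ℂ → ℂ} (hr : 0 < r) (hb : 0 < b)
    (hG : DifferentiableOn ℂ G (ball 0 r))
    (hpos : ∀ z ∈ ball (0:ℂ) r, 0 < (G z).re)
    (hG0 : G 0 = (b : ℂ)) :
    ‖deriv G 0‖ ≤ 2 * b / r ∧
      ∀ z ∈ ball (0:ℂ) r, ‖z‖ ≤ r / 2 → ‖G z‖ ≤ 3 * b := by
  have h0mem : (0:ℂ) ∈ ball (0:ℂ) r := mem_ball_self hr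
  set φ : ℂ → ℂ := fun z => (G z - b) / (G z + b) with hφ
  have hden : ∀ z ∈ ball (0:ℂ) r, G z + b ≠ 0 := by
    intro z hz h
    have : (G z + (b:ℂ)).re = 0 := by rw [h]; rfl
    simp only [Complex.add_re, Complex.ofReal_re] at this
    have := hpos z hz
    linarith
  have hφdiff : DifferentiableOn ℂ φ (ball 0 r) :=
    (hG.sub (differentiableOn_const _)).div (hG.add (differentiableOn_const _)) hden
  have hφ0 : φ 0 = 0 := by
    simp [hφ, hG0]
  have habslt : ∀ z ∈ ball (0:ℂ) r, ‖G z - b‖ < ‖G z + b‖ := by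
    intro z hz
    have hre := hpos z hz
    have hsq : Complex.normSq (G z - b) < Complex.normSq (G z + b) := by
      simp only [Complex.normSq_apply, Complex.sub_re, Complex.sub_im, Complex.add_re,
        Complex.add_im, Complex.ofReal_re, Complex.ofReal_im]
      nlinarith
    rw [Complex.norm_def, Complex.norm_def]
    exact Real.sqrt_lt_sqrt (Complex.normSq_nonneg _) hsq
  have hmaps : MapsTo φ (ball (0:ℂ) r) (ball (φ 0) 1) := by
    rw [hφ0]
    intro z hz
    rw [mem_ball_zero_iff]
    have h1 := habslt z hz
    have h2 : 0 < ‖G z + b‖ := lt_of_le_of_lt (norm_nonneg _) h1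
    rw [hφ]
    simp only [norm_div]
    rw [div_lt_one h2]
    exact h1
  have hφbound : ∀ z ∈ ball (0:ℂ) r, ‖φ z‖ ≤ ‖z‖ / r := by
    intro z hz
    have := Complex.dist_le_div_mul_dist_of_mapsTo_ball hφdiff (hmaps.mono_right ball_subset_closedBall) hz
    rw [hφ0] at this
    rw [div_eq_inv_mul]
    simpa [dist_zero_right, one_div] using this
  constructor
  · -- derivative bound
    have hd := Complex.norm_deriv_le_div_of_mapsTo_ball hφdiff (hmaps.mono_right ball_subset_closedBall) hr
    have hG' : HasDerivAt G (deriv G 0) 0 :=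
      (hG.differentiableAt (isOpen_ball.mem_nhds h0mem)).hasDerivAt
    have hφ' : HasDerivAt φ ((deriv G 0 * (G 0 + b) - (G 0 - b) * deriv G 0) / (G 0 + b) ^ 2)
        0 := (hG'.sub_const _).div (hG'.add_const _) (hden 0 h0mem)
    have hφder : deriv φ 0 = deriv G 0 / (2 * b) := by
      rw [hφ'.deriv, hG0]
      have hb' : ((b:ℂ)) ≠ 0 := by exact_mod_cast hb.ne'
      have h2b : ((b:ℂ) + b) ≠ 0 := by
        rw [← two_mul]; exact mul_ne_zero two_ne_zero hb'
      rw [div_eq_div_iff (pow_ne_zero 2 h2b) (mul_ne_zero two_ne_zero hb')]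
      ring
    rw [hφder] at hd
    rw [norm_div] at hd
    have h2b : ‖2 * (b:ℂ)‖ = 2 * b := by
      rw [norm_mul]
      simp [Complex.norm_real, abs_of_pos hb]
    rw [h2b] at hd
    rw [div_le_div_iff₀ (by positivity) hr] at hd
    rw [le_div_iff₀ hr]
    linarith
  · -- Harnack-type bound
    intro z hz hz2
    have hk : ‖φ z‖ ≤ 1 / 2 := by
      have h1 := hφbound z hz
      have : ‖z‖ / r ≤ 1 / 2 := by
        rw [div_le_div_iff₀ hr (by norm_num : (0:ℝ) < 2)]
        linarith
      linarith
    have heq : ‖G z - b‖ = ‖φ z‖ * ‖G z + b‖ := by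
      rw [hφ, norm_div, div_mul_cancel₀ _ (norm_ne_zero_iff.mpr (hden z hz))]
    have habs1 : ‖G z‖ ≤ ‖G z - b‖ + b := by
      calc ‖G z‖ = ‖(G z - b) + b‖ := by ring_nf
        _ ≤ ‖G z - b‖ + ‖(b:ℂ)‖ := norm_add_le _ _
        _ = ‖G z - b‖ + b := by rw [Complex.norm_real, Real.norm_eq_abs, abs_of_pos hb]
    have habs2 : ‖G z + b‖ ≤ ‖G z‖ + b := by
      calc ‖G z + b‖ ≤ ‖G z‖ + ‖(b:ℂ)‖ := norm_add_le _ _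
        _ = ‖G z‖ + b := by rw [Complex.norm_real, Real.norm_eq_abs, abs_of_pos hb]
    have hknn : 0 ≤ ‖φ z‖ := norm_nonneg _
    nlinarith [norm_nonneg (G z + b)]

lemma positive_harmonic_est {u : ℂ → ℝ} {C ε : ℝ} (hh : HarmonicOn u (ball 0 1))
    (hε : 0 < ε) (hε1 : ε ≤ 1) (hpos : ∀ z ∈ ball (0:ℂ) ε, -C < u z) :
    ‖fderiv ℝ u 0‖ ≤ 2 * (u 0 + C) / ε ∧
      ∀ z : ℂ, ‖z‖ ≤ ε / 2 → u z ≤ 3 * (u 0 + C) - C := by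
  obtain ⟨F, hFdiff, hFre, hF0, hFder⟩ := harmonic_rep hh
  set G : ℂ → ℂ := fun z => F z + C with hG
  have hsub : ball (0:ℂ) ε ⊆ ball (0:ℂ) 1 := ball_subset_ball hε1
  have hb : 0 < u 0 + C := by
    have := hpos 0 (mem_ball_self hε); linarith
  have hGdiff : DifferentiableOn ℂ G (ball 0 ε) := (hFdiff.mono hsub).add_const _
  have hGpos : ∀ z ∈ ball (0:ℂ) ε, 0 < (G z).re := by
    intro z hz
    have h1 := hpos z hz
    have h2 : (G z).re = u z + C := by
      simp [hG, Complex.add_re, hFre z (hsub hz)]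
    rw [h2]; linarith
  have hG0 : G 0 = ((u 0 + C : ℝ) : ℂ) := by
    simp only [hG, hF0]; push_cast; ring
  obtain ⟨hd, hbd⟩ := halfplane_est hε hb hGdiff hGpos hG0
  have hderG : deriv G 0 = deriv F 0 := by
    simp only [hG]
    exact deriv_add_const _
  constructor
  · calc ‖fderiv ℝ u 0‖ ≤ ‖deriv F 0‖ := hFder
      _ = ‖deriv G 0‖ := by rw [hderG]
      _ ≤ 2 * (u 0 + C) / ε := hd
  · intro z hz
    have hz' : z ∈ ball (0:ℂ) ε := by
      rw [mem_ball_zero_iff]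
      linarith
    have h2 : (G z).re = u z + C := by
      simp [hG, Complex.add_re, hFre z (hsub hz')]
    have h3 : (G z).re ≤ ‖G z‖ := Complex.re_le_norm _
    have h4 := hbd z hz' hz
    rw [h2] at h3
    linarith

lemma laplacian_neg (u : ℂ → ℝ) (z : ℂ) :
    laplacian (fun w => -u w) z = -laplacian u z := by
  have h1 : (fun w => fderiv ℝ (fun y => -u y) w 1) = fun w => -(fderiv ℝ u w 1) := by
    funext w; rw [fderiv_fun_neg]; simp
  have hI : (fun w => fderiv ℝ (fun y => -u y) w Complex.I)
      = fun w => -(fderiv ℝ u w Complex.I) := by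
    funext w; rw [fderiv_fun_neg]; simp
  rw [laplacian, laplacian, h1, hI]
  have h2 : ∀ (g : ℂ → ℝ) (w : ℂ), fderiv ℝ (fun y => -(g y)) z w = -(fderiv ℝ g z w) := by
    intro g w; rw [fderiv_fun_neg]; simp
  rw [h2, h2]
  ring

lemma HarmonicOn.neg {u : ℂ → ℝ} {s : Set ℂ} (hh : HarmonicOn u s) :
    HarmonicOn (fun z => -u z) s := by
  refine ⟨hh.1.neg, fun z hz => ?_⟩
  rw [laplacian_neg, hh.2 z hz, neg_zero]

lemma setA_lower {α s t : ℝ} (hα : 0 < α) (hs : s < 0) (ht : 0 < t) {x : ℝ × ℝ}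
    (hx : x ∈ setA α s t) {B : ℝ} (hB : 1 ≤ B) (hlow : -B ≤ x.1) :
    s * B ^ α < x.2 := by
  have hB0 : (0:ℝ) < B := lt_of_lt_of_le one_pos hB
  have hsB : s * B ^ α < 0 := mul_neg_of_neg_of_pos hs (Real.rpow_pos_of_pos hB0 α)
  obtain ⟨h1, h2, h3⟩ := hx
  rcases lt_trichotomy x.1 0 with h | h | h
  · have hv := h3 h
    have hmon : (-x.1) ^ α ≤ B ^ α :=
      Real.rpow_le_rpow (by linarith) (by linarith) hα.le
    nlinarith
  · have := h2 h; linarith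
  · have hv := h1 h
    have : (0:ℝ) < t * x.1 ^ α := mul_pos ht (Real.rpow_pos_of_pos h α)
    linarith

set_option maxHeartbeats 2000000 in
lemma master (α s t : ℝ) (hα : 0 < α) (hs : s < 0) (ht : 0 < t)
    (a : ℝ × ℝ) (c ε : ℝ) (hε : 0 < ε) (hε1 : ε ≤ 1) :
    ∃ M : ℝ, ∀ f : ℂ → ℝ × ℝ, HarmonicMapOn f (ball 0 1) →
      MapsTo f (ball (0:ℂ) 1) (setA α s t) →
      |(f 0).1 - a.1| ≤ 1 → |(f 0).2 - a.2| ≤ 1 →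
      (∀ z ∈ ball (0:ℂ) 1, ‖z‖ < ε → (f z).1 ≠ c) →
      ‖fderiv ℝ f 0‖ ≤ M := by
  set m : ℝ := c - 3 * (c - a.1 + 1) with hm
  set B1 : ℝ := 1 + |c| with hB1
  set B2 : ℝ := 1 + |m| + |c| with hB2
  set C1 : ℝ := -s * B1 ^ α with hC1
  set C2 : ℝ := -s * B2 ^ α with hC2
  have hB1ge : (1:ℝ) ≤ B1 := by
    have := abs_nonneg c; simp only [hB1]; linarith
  have hB2ge : (1:ℝ) ≤ B2 := by
    have h1 := abs_nonneg c; have h2 := abs_nonneg m; simp only [hB2]; linarith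
  have hC1pos : 0 < C1 := by
    apply mul_pos (by linarith) (Real.rpow_pos_of_pos (by linarith) α)
  have hC2pos : 0 < C2 := by
    apply mul_pos (by linarith) (Real.rpow_pos_of_pos (by linarith) α)
  set C : ℝ := max C1 C2 with hC
  set Mu : ℝ := 2 * (|a.1| + |c| + 2) / ε with hMu
  set Mv : ℝ := 4 * (|a.2| + 1 + C) / ε with hMv
  refine ⟨Mu + Mv, ?_⟩
  intro f hf hmaps hf1 hf2 hne
  set u : ℂ → ℝ := fun z => (f z).1 with hu
  set v : ℂ → ℝ := fun z => (f z).2 with hv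
  have hharmu : HarmonicOn u (ball 0 1) := hf.1
  have hharmv : HarmonicOn v (ball 0 1) := hf.2
  have h0mem : (0:ℂ) ∈ ball (0:ℂ) 1 := mem_ball_self one_pos
  have hsub : ball (0:ℂ) ε ⊆ ball (0:ℂ) 1 := ball_subset_ball hε1
  have hne' : ∀ z ∈ ball (0:ℂ) ε, u z ≠ c := by
    intro z hz
    exact hne z (hsub hz) (by rwa [← mem_ball_zero_iff])
  -- continuity of u on the small ball
  have hucont : ContinuousOn u (ball (0:ℂ) ε) := (hharmu.1.continuousOn).mono hsub
  have hprec : IsPreconnected (ball (0:ℂ) ε) := (convex_ball (0:ℂ) ε).isPreconnected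
  -- dichotomy
  have hdich : (∀ z ∈ ball (0:ℂ) ε, c < u z) ∨ (∀ z ∈ ball (0:ℂ) ε, u z < c) := by
    rcases (hne' 0 (mem_ball_self hε)).lt_or_gt with h0 | h0
    · right
      intro z hz
      by_contra hcon
      push_neg at hcon
      have hlt : c < u z := lt_of_le_of_ne hcon (Ne.symm (hne' z hz))
      have := hprec.intermediate_value (mem_ball_self hε) hz hucont
      have hc : c ∈ Set.Icc (u 0) (u z) := ⟨le_of_lt h0, le_of_lt hlt⟩
      obtain ⟨w, hw, hwc⟩ := this hc
      exact hne' w hw hwc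
    · left
      intro z hz
      by_contra hcon
      push_neg at hcon
      have hlt : u z < c := lt_of_le_of_ne hcon (hne' z hz)
      have := hprec.intermediate_value hz (mem_ball_self hε) hucont
      have hc : c ∈ Set.Icc (u z) (u 0) := ⟨le_of_lt hlt, le_of_lt h0⟩
      obtain ⟨w, hw, hwc⟩ := this hc
      exact hne' w hw hwc
  -- bounds on u 0, v 0
  have hu0 : |u 0 - a.1| ≤ 1 := hf1
  have hv0 : |v 0 - a.2| ≤ 1 := hf2
  have hu0a := abs_le.1 hu0
  have hv0a := abs_le.1 hv0
  have hca := abs_le.1 (le_refl |c|)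
  have hc1 : -|c| ≤ c := neg_abs_le c
  have hc2 : c ≤ |c| := le_abs_self c
  have ha1 : -|a.1| ≤ a.1 := neg_abs_le a.1
  have ha2 : a.1 ≤ |a.1| := le_abs_self a.1
  have hb1 : -|a.2| ≤ a.2 := neg_abs_le a.2
  have hb2 : a.2 ≤ |a.2| := le_abs_self a.2
  -- component estimates
  have hcomp : ‖fderiv ℝ u 0‖ ≤ Mu ∧ ‖fderiv ℝ v 0‖ ≤ Mv := by
    rcases hdich with hgt | hlt
    · -- u > c on ball ε
      have hest1 := positive_harmonic_est (C := -c) hharmu hε hε1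
        (fun z hz => by have := hgt z hz; linarith)
      have huB : ‖fderiv ℝ u 0‖ ≤ Mu := by
        refine le_trans hest1.1 ?_
        rw [hMu, div_le_div_iff₀ hε hε]
        nlinarith [hu0a.2]
      have hvpos : ∀ z ∈ ball (0:ℂ) ε, -C1 < v z := by
        intro z hz
        have hA := hmaps (hsub hz)
        have hulow : -B1 ≤ (f z).1 := by
          have := hgt z hz
          simp only [hu] at this
          simp only [hB1]
          linarith
        have := setA_lower hα hs ht hA hB1ge hulow
        simp only [hC1]
        simp only [hv]
        nlinarith
      have hest2 := positive_harmonic_est (C := C1) hharmv hε hε1 hvpos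
      have hvB : ‖fderiv ℝ v 0‖ ≤ Mv := by
        refine le_trans hest2.1 ?_
        rw [hMv]
        have hC1C : C1 ≤ C := le_max_left _ _
        rw [div_le_div_iff₀ hε hε]
        have hv0C : 0 < v 0 + C1 := by
          have := hvpos 0 (mem_ball_self hε); linarith
        nlinarith
      exact ⟨huB, hvB⟩
    · -- u < c on ball ε
      have hest1 := positive_harmonic_est (C := c) (HarmonicOn.neg hharmu) hε hε1
        (fun z hz => by have h := hlt z hz; show -c < -u z; linarith)
      have hderneg : ‖fderiv ℝ (fun z => -u z) 0‖ = ‖fderiv ℝ u 0‖ := by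
        rw [fderiv_fun_neg, norm_neg]
      have huB : ‖fderiv ℝ u 0‖ ≤ Mu := by
        rw [← hderneg]
        refine le_trans hest1.1 ?_
        rw [hMu, div_le_div_iff₀ hε hε]
        nlinarith [hu0a.1]
      -- lower bound on u on the half ball
      have hulow : ∀ z : ℂ, ‖z‖ ≤ ε / 2 → m ≤ u z := by
        intro z hz
        have h := hest1.2 z hz
        simp only [hm]
        have := hu0a.1
        nlinarith
      have hvpos : ∀ z ∈ ball (0:ℂ) (ε/2), -C2 < v z := by
        intro z hz
        have hz2 : ‖z‖ ≤ ε / 2 := by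
          exact le_of_lt (mem_ball_zero_iff.1 hz)
        have hzball : z ∈ ball (0:ℂ) 1 := by
          rw [mem_ball_zero_iff]
          linarith
        have hA := hmaps hzball
        have hulow2 : -B2 ≤ (f z).1 := by
          have h1 := hulow z hz2
          have h2 : -|m| ≤ m := neg_abs_le m
          simp only [hu] at h1
          simp only [hB2]
          linarith
        have := setA_lower hα hs ht hA hB2ge hulow2
        simp only [hC2, hv]
        nlinarith
      have hest2 := positive_harmonic_est (C := C2) hharmv (by linarith) (by linarith) hvpos
      have hvB : ‖fderiv ℝ v 0‖ ≤ Mv := by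
        refine le_trans hest2.1 ?_
        rw [hMv]
        have hC2C : C2 ≤ C := le_max_right _ _
        have hv0C : 0 < v 0 + C2 := by
          have := hvpos 0 (mem_ball_self (by linarith)); linarith
        rw [div_le_div_iff₀ (by linarith : (0:ℝ) < ε/2) hε]
        nlinarith
      exact ⟨huB, hvB⟩
  -- combine components
  have hud : DifferentiableAt ℝ u 0 :=
    (hharmu.1.contDiffAt (isOpen_ball.mem_nhds h0mem)).differentiableAt (by norm_num)
  have hvd : DifferentiableAt ℝ v 0 :=
    (hharmv.1.contDiffAt (isOpen_ball.mem_nhds h0mem)).differentiableAt (by norm_num)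
  have hprod : HasFDerivAt f ((fderiv ℝ u 0).prod (fderiv ℝ v 0)) 0 := by
    have h := hud.hasFDerivAt.prodMk hvd.hasFDerivAt
    have heq : (fun z => (u z, v z)) = f := by funext z; rfl
    rw [← heq]
    exact h
  rw [hprod.fderiv]
  have hMu0 : 0 ≤ Mu := le_trans (norm_nonneg _) hcomp.1
  have hMv0 : 0 ≤ Mv := le_trans (norm_nonneg _) hcomp.2
  apply ContinuousLinearMap.opNorm_le_bound _ (by positivity)
  intro w
  rw [ContinuousLinearMap.prod_apply]
  rw [Prod.norm_def]
  apply max_le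
  · calc ‖fderiv ℝ u 0 w‖ ≤ ‖fderiv ℝ u 0‖ * ‖w‖ := (fderiv ℝ u 0).le_opNorm w
      _ ≤ (Mu + Mv) * ‖w‖ := by
          apply mul_le_mul_of_nonneg_right _ (norm_nonneg w)
          linarith [hcomp.1]
  · calc ‖fderiv ℝ v 0 w‖ ≤ ‖fderiv ℝ v 0‖ * ‖w‖ := (fderiv ℝ v 0).le_opNorm w
      _ ≤ (Mu + Mv) * ‖w‖ := by
          apply mul_le_mul_of_nonneg_right _ (norm_nonneg w)
          linarith [hcomp.2]

/-- Level-set properties (Proposition 2.1 of the paper) for a degenerating sequence of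
harmonic maps into `A_{α,s,t}`: (i) every value `c` is attained by the first component
`u_k` for all large `k`; (ii) the level set `{u_k = c}` approaches the origin. -/
theorem levelSets_A (α s t : ℝ) (hα : 0 < α) (hα1 : α ≠ 1) (hs : s < 0) (ht : 0 < t)
    (a : ℝ × ℝ) (ha : a ∈ setA α s t) (f : ℕ → ℂ → ℝ × ℝ)
    (hharm : ∀ k, HarmonicMapOn (f k) (ball (0 : ℂ) 1))
    (hmaps : ∀ k, MapsTo (f k) (ball (0 : ℂ) 1) (setA α s t))
    (hconv : Tendsto (fun k => f k 0) atTop (𝓝 a))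
    (hblow : Tendsto (fun k => ‖fderiv ℝ (f k) 0‖) atTop atTop) :
    ∀ c : ℝ,
      (∃ K : ℕ, ∀ k ≥ K, ∃ z ∈ ball (0 : ℂ) 1, (f k z).1 = c) ∧
      (∀ ε > (0 : ℝ), ∃ K : ℕ, ∀ k ≥ K,
        ∃ z ∈ ball (0 : ℂ) 1, ‖z‖ < ε ∧ (f k z).1 = c) := by
  intro c
  have key : ∀ ε : ℝ, 0 < ε → ε ≤ 1 → ∃ K : ℕ, ∀ k ≥ K,
      ∃ z ∈ ball (0:ℂ) 1, ‖z‖ < ε ∧ (f k z).1 = c := by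
    intro ε hε hε1
    obtain ⟨M, hM⟩ := master α s t hα hs ht a c ε hε hε1
    have h1 : ∀ᶠ k in atTop, f k 0 ∈ ball a 1 := hconv (ball_mem_nhds a one_pos)
    have h2 : ∀ᶠ k in atTop, M < ‖fderiv ℝ (f k) 0‖ := hblow.eventually_gt_atTop M
    rcases eventually_atTop.1 (h1.and h2) with ⟨K, hK⟩
    refine ⟨K, fun k hk => ?_⟩
    by_contra hcon
    push_neg at hcon
    have hb := (hK k hk).1
    have hdist : dist (f k 0) a < 1 := mem_ball.1 hb
    rw [Prod.dist_eq] at hdist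
    have hd1 : |(f k 0).1 - a.1| ≤ 1 := by
      rw [← Real.dist_eq]
      exact le_of_lt (lt_of_le_of_lt (le_max_left _ _) hdist)
    have hd2 : |(f k 0).2 - a.2| ≤ 1 := by
      rw [← Real.dist_eq]
      exact le_of_lt (lt_of_le_of_lt (le_max_right _ _) hdist)
    have := hM (f k) (hharm k) (hmaps k) hd1 hd2 hcon
    linarith [(hK k hk).2]
  refine ⟨?_, ?_⟩
  · obtain ⟨K, hK⟩ := key 1 one_pos le_rfl
    refine ⟨K, fun k hk => ?_⟩
    obtain ⟨z, hz, _, hzc⟩ := hK k hk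
    exact ⟨z, hz, hzc⟩
  · intro ε hε
    obtain ⟨K, hK⟩ := key (min ε 1) (lt_min hε one_pos) (min_le_right _ _)
    refine ⟨K, fun k hk => ?_⟩
    obtain ⟨z, hz, hze, hzc⟩ := hK k hk
    exact ⟨z, hz, lt_of_lt_of_le hze (min_le_left _ _), hzc⟩
end

section
/- Let α>0, t>0 and e^{−2πα}·t < s < t, set D = C_{α,s,t}, and suppose a = (a₁,a₂) ∈ D and f_k = (u_k,v_k): Δ → D is a sequence of harmonic maps with f_k(0) → a and ‖df_k(0)‖ → ∞ as k → ∞. Then for every c ∈ ℝ: (i) there exists K ∈ ℕ such that c ∈ u_k(Δ) for all k ≥ K; and (ii) for every ε>0 there exists K ∈ ℕ such that for all k ≥ K there is a point z ∈ Δ with |z| < ε and u_k(z) = c. -/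
open Complex Metric Set Filter Topology

/-- The base domain `C_{α,s,t}`: in polar coordinates, `s·e^{αφ} < r < t·e^{αφ}`. -/
def setC (α s t : ℝ) : Set (ℝ × ℝ) :=
  {x | ∃ r φ : ℝ, s * Real.exp (α * φ) < r ∧ r < t * Real.exp (α * φ) ∧
       x = (r * Real.cos φ, r * Real.sin φ)}

noncomputable def gradC (u : ℂ → ℝ) (z : ℂ) : ℂ :=
  (fderiv ℝ u z 1 : ℝ) - (fderiv ℝ u z I : ℝ) * I

/-- helper: complex differentiability from CR -/
lemma hasDerivAt_of_CR {g : ℂ → ℂ} {L : ℂ →L[ℝ] ℂ} {z : ℂ}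
    (h : HasFDerivAt g L z) (hCR : L I = I * L 1) : HasDerivAt g (L 1) z := by
  rw [hasDerivAt_iff_hasFDerivAt]
  apply hasFDerivAt_of_restrictScalars ℝ h
  ext w
  have hw : (w.re : ℂ) + (w.im : ℂ) * I = w := Complex.re_add_im w
  have : L w = w.re • L 1 + w.im • L I := by
    conv_lhs => rw [← hw]
    have h1 : (w.re : ℂ) = w.re • (1 : ℂ) := by simp
    have h2 : (w.im : ℂ) * I = w.im • I := by simp [Complex.real_smul]
    rw [h1, h2, map_add, map_smul, map_smul]
  simp only [ContinuousLinearMap.coe_restrictScalars', ContinuousLinearMap.smulRight_apply,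
    ContinuousLinearMap.one_apply]
  rw [this, hCR, ContinuousLinearMap.toSpanSingleton_apply, smul_eq_mul]
  simp only [Complex.real_smul]
  conv_lhs => rw [← hw]
  ring

lemma gradC_holo {u : ℂ → ℝ} {c : ℂ} {r : ℝ} (hu : HarmonicOn u (ball c r)) :
    DifferentiableOn ℂ (gradC u) (ball c r) := by
  intro z hz
  have hop : IsOpen (ball c r) := isOpen_ball
  -- fderiv u is C¹ on the ball
  have hC1 : ContDiffOn ℝ 1 (fderiv ℝ u) (ball c r) :=
    hu.1.fderiv_of_isOpen hop (by norm_num)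
  have hdg : DifferentiableAt ℝ (fderiv ℝ u) z :=
    (hC1.differentiableOn one_ne_zero).differentiableAt (hop.mem_nhds hz)
  set G := fderiv ℝ (fderiv ℝ u) z with hG
  have hGd : HasFDerivAt (fderiv ℝ u) G z := hdg.hasFDerivAt
  -- the linear functional Λ : (ℂ →L[ℝ] ℝ) →L[ℝ] ℂ, T ↦ T 1 - (T I) * I
  set Λ : (ℂ →L[ℝ] ℝ) →L[ℝ] ℂ :=
    Complex.ofRealCLM.comp (ContinuousLinearMap.apply ℝ ℝ (1 : ℂ)) -
      I • (Complex.ofRealCLM.comp (ContinuousLinearMap.apply ℝ ℝ (I : ℂ))) with hΛ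
  have hΛap : ∀ T : ℂ →L[ℝ] ℝ, Λ T = (T 1 : ℝ) - (T I : ℝ) * I := by
    intro T
    simp [hΛ, ContinuousLinearMap.apply, sub_eq_add_neg, mul_comm]
  have hfun : gradC u = Λ ∘ fderiv ℝ u := funext fun w => (hΛap (fderiv ℝ u w)).symm
  have hgF : HasFDerivAt (gradC u) (Λ.comp G) z := by
    rw [hfun]; exact Λ.hasFDerivAt.comp z hGd
  -- second derivative symmetry
  have hsymm : ∀ v w : ℂ, G v w = G w v := by
    refine second_derivative_symmetric_of_eventually (f := u) (f' := fderiv ℝ u) ?_ hGd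
    filter_upwards [hop.mem_nhds hz] with y hy
    exact ((hu.1.differentiableOn (by norm_num)).differentiableAt (hop.mem_nhds hy)).hasFDerivAt
  -- evaluate second partials
  have hev : ∀ a b : ℂ, fderiv ℝ (fun w => fderiv ℝ u w a) z b = G b a := by
    intro a b
    have : HasFDerivAt (fun w => fderiv ℝ u w a)
        ((ContinuousLinearMap.apply ℝ ℝ a).comp G) z :=
      (ContinuousLinearMap.apply ℝ ℝ a).hasFDerivAt.comp z hGd
    rw [this.fderiv]; rfl
  have hlap : G 1 1 + G I I = 0 := by
    have := hu.2 z hz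
    rw [laplacian, hev 1 1, hev I I] at this
    exact this
  -- CR for Λ.comp G
  have hCR : (Λ.comp G) I = I * (Λ.comp G) 1 := by
    simp only [ContinuousLinearMap.comp_apply, hΛap]
    have h1 : G I 1 = G 1 I := hsymm I 1
    have h2 : G I I = -(G 1 1) := by linarith
    rw [h1, h2]
    push_cast
    have : (I:ℂ) * I = -1 := Complex.I_mul_I
    linear_combination (↑((G 1) I) : ℂ) * this
  exact (hasDerivAt_of_CR hgF hCR).differentiableAt.differentiableWithinAt

section est
variable {u : ℂ → ℝ} {r M : ℝ}

/-- pointwise algebraic identity -/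
lemma gradC_polar (u : ℂ → ℝ) (w : ℂ) (θ : ℝ) :
    cexp (↑θ * I) * gradC u w =
      ↑(fderiv ℝ u w (cexp (↑θ * I))) - I * ↑(fderiv ℝ u w (cexp (↑θ * I) * I)) := by
  have hc : cexp (↑θ * I) = (Real.cos θ : ℂ) + (Real.sin θ : ℂ) * I := by
    rw [Complex.exp_mul_I, Complex.ofReal_cos, Complex.ofReal_sin]
  have h1 : fderiv ℝ u w (cexp (↑θ * I)) =
      Real.cos θ * fderiv ℝ u w 1 + Real.sin θ * fderiv ℝ u w I := by
    rw [hc]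
    have : (Real.cos θ : ℂ) + (Real.sin θ : ℂ) * I
        = (Real.cos θ) • (1 : ℂ) + (Real.sin θ) • (I : ℂ) := by
      simp [Complex.real_smul]
    rw [this, map_add, map_smul, map_smul]; simp [smul_eq_mul]
  have h2 : fderiv ℝ u w (cexp (↑θ * I) * I) =
      (-Real.sin θ) * fderiv ℝ u w 1 + Real.cos θ * fderiv ℝ u w I := by
    have hcI : cexp (↑θ * I) * I = ((-Real.sin θ : ℝ) : ℂ) + ((Real.cos θ : ℝ) : ℂ) * I := by
      rw [hc]; push_cast
      linear_combination (Complex.sin ↑θ) * Complex.I_mul_I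
    rw [hcI]
    have : ((-Real.sin θ : ℝ) : ℂ) + ((Real.cos θ : ℝ) : ℂ) * I
        = (-Real.sin θ : ℝ) • (1 : ℂ) + (Real.cos θ : ℝ) • (I : ℂ) := by
      simp [Complex.real_smul]
    rw [this, map_add, map_smul, map_smul]; simp [smul_eq_mul]
  rw [h1, h2, hc, gradC]
  push_cast
  linear_combination (-(Complex.sin ↑θ) * (fderiv ℝ u w I : ℂ)) * Complex.I_mul_I

end est

lemma gradC_abs_bound (hr : 0 < r) (hu : HarmonicOn u (ball 0 r))
    (hM : ∀ z ∈ ball (0 : ℂ) r, |u z| ≤ M) :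
    ‖(gradC u 0)‖ ≤ 4 * M / r := by
  have hM0 : 0 ≤ M := (abs_nonneg _).trans (hM 0 (mem_ball_self hr))
  set R := r / 2 with hRdef
  have hR : 0 < R := by positivity
  have hRr : R < r := by rw [hRdef]; linarith
  set r₁ := 3 * r / 4 with hr₁def
  have hr₁r : r₁ < r := by rw [hr₁def]; linarith
  have hRr₁ : R + r / 8 ≤ r₁ := by rw [hr₁def, hRdef]; linarith
  have hucont : ContinuousOn u (ball 0 r) := hu.1.continuousOn
  have hC1 : ContDiffOn ℝ 1 (fderiv ℝ u) (ball (0:ℂ) r) :=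
    hu.1.fderiv_of_isOpen isOpen_ball (by norm_num)
  have hdcont : ContinuousOn (fderiv ℝ u) (ball (0:ℂ) r) := hC1.continuousOn
  have hudiff : ∀ z ∈ ball (0:ℂ) r, HasFDerivAt u (fderiv ℝ u z) z := fun z hz =>
    ((hu.1.differentiableOn (by norm_num)).differentiableAt
      (isOpen_ball.mem_nhds hz)).hasFDerivAt
  have hKsub : closedBall (0:ℂ) r₁ ⊆ ball 0 r := closedBall_subset_ball hr₁r
  obtain ⟨Cd, hCd⟩ :=
    (isCompact_closedBall (0:ℂ) r₁).exists_bound_of_continuousOn (hdcont.mono hKsub)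
  -- the circle parametrization
  set e : ℝ → ℂ := fun θ => cexp (↑θ * I) with he
  have hecont : Continuous e := Complex.continuous_exp.comp (continuous_ofReal.mul continuous_const)
  have hene : Continuous fun θ : ℝ => cexp (-(↑θ * I)) :=
    Complex.continuous_exp.comp ((continuous_ofReal.mul continuous_const).neg)
  have habse : ∀ θ : ℝ, ‖(e θ)‖ = 1 := fun θ => Complex.norm_exp_ofReal_mul_I θ
  have habsen : ∀ θ : ℝ, ‖(cexp (-(↑θ * I)))‖ = 1 := by
    intro θ
    have := Complex.norm_exp_ofReal_mul_I (-θ)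
    convert this using 2
    push_cast; ring
  have hmemK : ∀ (x : ℝ), |x| ≤ r₁ → ∀ θ : ℝ, (x:ℂ) * e θ ∈ closedBall (0:ℂ) r₁ := by
    intro x hx θ
    rw [mem_closedBall_zero_iff, norm_mul, habse, Complex.norm_real]
    simpa using hx
  have hmemB : ∀ (x : ℝ), |x| ≤ r₁ → ∀ θ : ℝ, (x:ℂ) * e θ ∈ ball (0:ℂ) r := fun x hx θ =>
    hKsub (hmemK x hx θ)
  -- continuity helpers in θ
  have hmap : ∀ (x : ℝ), |x| ≤ r₁ → Continuous fun θ : ℝ => (x:ℂ) * e θ :=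
    fun x _ => continuous_const.mul hecont
  have hcu : ∀ (x : ℝ), |x| ≤ r₁ → Continuous fun θ : ℝ => (u ((x:ℂ) * e θ) : ℂ) := by
    intro x hx
    exact Complex.continuous_ofReal.comp
      (hucont.comp_continuous (hmap x hx) (fun θ => hmemB x hx θ))
  have hcd : ∀ (x : ℝ), |x| ≤ r₁ → Continuous fun θ : ℝ => fderiv ℝ u ((x:ℂ) * e θ) := by
    intro x hx
    exact hdcont.comp_continuous (hmap x hx) (fun θ => hmemB x hx θ)
  -- the two integral functionals
  set Ψ : ℝ → ℂ := fun ρ => ∫ θ in (0:ℝ)..(2*Real.pi), cexp (-(↑θ * I)) * (u ((ρ:ℂ) * e θ) : ℂ)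
    with hΨ
  set Ψd : ℝ → ℂ := fun ρ => ∫ θ in (0:ℝ)..(2*Real.pi),
      cexp (-(↑θ * I)) * (fderiv ℝ u ((ρ:ℂ) * e θ) (e θ) : ℂ) with hΨd
  -- claim c1 : differentiation under the integral sign
  have c1 : ∀ ρ₀ : ℝ, |ρ₀| ≤ R → HasDerivAt Ψ (Ψd ρ₀) ρ₀ := by
    intro ρ₀ hρ₀
    have hρ₀r₁ : |ρ₀| ≤ r₁ := le_trans hρ₀ (by linarith)
    have hball : ∀ x ∈ ball ρ₀ (r/8), |x| ≤ r₁ := by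
      intro x hx
      rw [mem_ball, Real.dist_eq] at hx
      calc |x| ≤ |x - ρ₀| + |ρ₀| := by
                  calc |x| = |(x - ρ₀) + ρ₀| := by ring_nf
                  _ ≤ _ := abs_add_le _ _
        _ ≤ r/8 + R := by linarith
        _ ≤ r₁ := by linarith
    have key := intervalIntegral.hasDerivAt_integral_of_dominated_loc_of_deriv_le
      (F := fun (x : ℝ) (θ : ℝ) => cexp (-(↑θ * I)) * (u ((x:ℂ) * e θ) : ℂ))
      (F' := fun (x : ℝ) (θ : ℝ) => cexp (-(↑θ * I)) * (fderiv ℝ u ((x:ℂ) * e θ) (e θ) : ℂ))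
      (x₀ := ρ₀) (a := (0:ℝ)) (b := 2*Real.pi) (bound := fun _ => Cd)
      (μ := MeasureTheory.volume) (Metric.ball_mem_nhds ρ₀ (by positivity : (0:ℝ) < r/8))
      ?_ ?_ ?_ ?_ ?_ ?_
    · exact key.2
    · filter_upwards [Metric.ball_mem_nhds ρ₀ (by positivity : (0:ℝ) < r/8)] with x hx
      exact ((hene.mul (hcu x (hball x hx))).aestronglyMeasurable)
    · exact (hene.mul (hcu ρ₀ hρ₀r₁)).intervalIntegrable _ _
    · exact ((hene.mul (Complex.continuous_ofReal.comp
        ((hcd ρ₀ hρ₀r₁).clm_apply hecont))).aestronglyMeasurable)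
    · apply MeasureTheory.ae_of_all
      intro θ _ x hx
      have hx1 : |x| ≤ r₁ := hball x hx
      rw [norm_mul, habsen, one_mul, Complex.norm_real, Real.norm_eq_abs]
      calc |fderiv ℝ u ((x:ℂ) * e θ) (e θ)| ≤ ‖fderiv ℝ u ((x:ℂ) * e θ)‖ * ‖e θ‖ :=
            (fderiv ℝ u ((x:ℂ) * e θ)).le_opNorm _
        _ = ‖fderiv ℝ u ((x:ℂ) * e θ)‖ := by rw [habse, mul_one]
        _ ≤ Cd := hCd _ (hmemK x hx1 θ)
    · exact intervalIntegrable_const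
    · apply MeasureTheory.ae_of_all
      intro θ _ x hx
      have hx1 : |x| ≤ r₁ := hball x hx
      have hmker : HasDerivAt (fun y : ℝ => (y:ℂ) * e θ) (e θ) x := by
        simpa using ((hasDerivAt_id x).ofReal_comp.mul_const (e θ))
      have hup : HasDerivAt (fun y : ℝ => u ((y:ℂ) * e θ)) (fderiv ℝ u ((x:ℂ) * e θ) (e θ)) x :=
        (hudiff _ (hmemB x hx1 θ)).comp_hasDerivAt x hmker
      simpa using hup.ofReal_comp.const_mul (cexp (-(↑θ * I)))
  -- claim c3 : circle mean value
  have hgholo := gradC_holo hu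
  have c3 : ∀ ρ : ℝ, 0 < ρ → ρ < r →
      (∫ θ in (0:ℝ)..(2*Real.pi), gradC u ((ρ:ℂ) * e θ)) = 2 * Real.pi * gradC u 0 := by
    intro ρ hρ hρr
    have hd : DiffContOnCl ℂ (gradC u) (ball 0 (ρ:ℝ)) := by
      constructor
      · exact hgholo.mono (ball_subset_ball hρr.le)
      · rw [closure_ball (0:ℂ) hρ.ne']
        exact hgholo.continuousOn.mono (closedBall_subset_ball hρr)
    have hC := hd.circleIntegral_sub_inv_smul (mem_ball_self hρ)
    rw [circleIntegral] at hC
    have heq : ∀ θ ∈ uIcc (0:ℝ) (2*Real.pi),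
        deriv (circleMap 0 ρ) θ • ((circleMap 0 ρ θ - 0)⁻¹ • gradC u (circleMap 0 ρ θ))
          = I * gradC u ((ρ:ℂ) * e θ) := by
      intro θ _
      have hne : circleMap 0 ρ θ ≠ 0 := circleMap_ne_center hρ.ne'
      rw [deriv_circleMap, smul_eq_mul, smul_eq_mul, sub_zero]
      have hcm : circleMap 0 ρ θ = (ρ:ℂ) * e θ := by
        simp [circleMap, he]
      rw [← hcm]
      field_simp
    rw [intervalIntegral.integral_congr heq] at hC
    rw [intervalIntegral.integral_const_mul] at hC
    have hI : (I : ℂ) ≠ 0 := Complex.I_ne_zero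
    rw [smul_eq_mul] at hC
    apply mul_left_cancel₀ hI
    rw [hC]; ring
  -- claim c4 : integration by parts in θ
  have c4 : ∀ ρ : ℝ, |ρ| ≤ r₁ →
      (∫ θ in (0:ℝ)..(2*Real.pi),
        cexp (-(↑θ * I)) * (fderiv ℝ u ((ρ:ℂ) * e θ) ((ρ:ℂ) * e θ * I) : ℂ)) = I * Ψ ρ := by
    intro ρ hρ
    set W : ℝ → ℂ := fun θ => cexp (-(↑θ * I)) * (u ((ρ:ℂ) * e θ) : ℂ) with hW
    set W' : ℝ → ℂ := fun θ => -I * cexp (-(↑θ * I)) * (u ((ρ:ℂ) * e θ) : ℂ)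
      + cexp (-(↑θ * I)) * (fderiv ℝ u ((ρ:ℂ) * e θ) ((ρ:ℂ) * e θ * I) : ℂ) with hW'
    have hder : ∀ θ ∈ uIcc (0:ℝ) (2*Real.pi), HasDerivAt W (W' θ) θ := by
      intro θ _
      have h1 : HasDerivAt (fun θ : ℝ => cexp (-(↑θ * I))) (-I * cexp (-(↑θ * I))) θ := by
        have hin : HasDerivAt (fun θ : ℝ => -(↑θ * I)) (-I) θ := by
          exact (((hasDerivAt_id θ).ofReal_comp.mul_const I).neg).congr_deriv (by simp)
        simpa [mul_comm] using hin.cexp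
      have hm : HasDerivAt (fun θ : ℝ => (ρ:ℂ) * e θ) ((ρ:ℂ) * e θ * I) θ := by
        have : HasDerivAt e (e θ * I) θ := by
          simpa using ((hasDerivAt_id θ).ofReal_comp.mul_const I).cexp
        simpa [mul_assoc] using this.const_mul (ρ:ℂ)
      have h2 : HasDerivAt (fun θ : ℝ => (u ((ρ:ℂ) * e θ) : ℂ))
          ((fderiv ℝ u ((ρ:ℂ) * e θ) ((ρ:ℂ) * e θ * I) : ℝ) : ℂ) θ :=
        (((hudiff _ (hmemB ρ hρ θ)).comp_hasDerivAt θ hm)).ofReal_comp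
      refine (h1.mul h2).congr_deriv ?_; simp only [hW']
    have hint1 : IntervalIntegrable (fun θ : ℝ => -I * cexp (-(↑θ * I)) * (u ((ρ:ℂ) * e θ) : ℂ))
        MeasureTheory.volume 0 (2*Real.pi) :=
      (((continuous_const.mul hene)).mul (hcu ρ hρ)).intervalIntegrable _ _
    have hint2 : IntervalIntegrable
        (fun θ : ℝ => cexp (-(↑θ * I)) * (fderiv ℝ u ((ρ:ℂ) * e θ) ((ρ:ℂ) * e θ * I) : ℂ))
        MeasureTheory.volume 0 (2*Real.pi) := by
      apply Continuous.intervalIntegrable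
      exact hene.mul (Complex.continuous_ofReal.comp
        ((hcd ρ hρ).clm_apply ((continuous_const.mul hecont).mul continuous_const)))
    have hftc := intervalIntegral.integral_eq_sub_of_hasDerivAt hder (hint1.add hint2)
    have hWend : W (2*Real.pi) = W 0 := by
      have h2pi : cexp (2 * (Real.pi:ℂ) * I) = 1 := by
        have := Complex.exp_int_mul_two_pi_mul_I 1
        convert this using 2
        push_cast; ring
      have h2pin : cexp (-(2 * (Real.pi:ℂ) * I)) = 1 := by
        have := Complex.exp_int_mul_two_pi_mul_I (-1)
        convert this using 2
        push_cast; ring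
      simp [hW, he, Complex.ofReal_mul, Complex.ofReal_ofNat, h2pi, h2pin]
    rw [hW'] at hftc
    rw [intervalIntegral.integral_add hint1 hint2, hWend, sub_self] at hftc
    have hfirst : (∫ θ in (0:ℝ)..(2*Real.pi), -I * cexp (-(↑θ * I)) * (u ((ρ:ℂ) * e θ) : ℂ))
        = -I * Ψ ρ := by
      rw [hΨ]
      rw [← intervalIntegral.integral_const_mul]
      apply intervalIntegral.integral_congr
      intro θ _; ring
    rw [hfirst] at hftc
    linear_combination hftc
  -- claim c2 : the key differential identity
  have c2 : ∀ ρ : ℝ, 0 < ρ → ρ ≤ R →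
      Ψ ρ + (ρ:ℂ) * Ψd ρ = (ρ:ℂ) * (2 * Real.pi * gradC u 0) := by
    intro ρ hρ hρR
    have hρr₁ : |ρ| ≤ r₁ := by rw [abs_of_pos hρ]; linarith
    have h3 := c3 ρ hρ (by linarith)
    have hmul : (ρ:ℂ) * (∫ θ in (0:ℝ)..(2*Real.pi), gradC u ((ρ:ℂ) * e θ))
        = (ρ:ℂ) * (2 * Real.pi * gradC u 0) := by rw [h3]
    rw [← intervalIntegral.integral_const_mul] at hmul
    have hpt : ∀ θ ∈ uIcc (0:ℝ) (2*Real.pi),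
        (ρ:ℂ) * gradC u ((ρ:ℂ) * e θ)
          = (ρ:ℂ) * (cexp (-(↑θ * I)) * (fderiv ℝ u ((ρ:ℂ) * e θ) (e θ) : ℂ))
            - I * (cexp (-(↑θ * I)) * (fderiv ℝ u ((ρ:ℂ) * e θ) ((ρ:ℂ) * e θ * I) : ℂ)) := by
      intro θ _
      simp only [he]
      have hpolar := gradC_polar u ((ρ:ℂ) * cexp (↑θ * I)) θ
      have hee : cexp (-(↑θ * I)) * cexp (↑θ * I) = 1 := by
        rw [← Complex.exp_add]; simp
      have hlin : (fderiv ℝ u ((ρ:ℂ) * cexp (↑θ * I))) ((ρ:ℂ) * cexp (↑θ * I) * I)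
          = ρ * (fderiv ℝ u ((ρ:ℂ) * cexp (↑θ * I))) (cexp (↑θ * I) * I) := by
        have harg : (ρ:ℂ) * cexp (↑θ * I) * I = ρ • (cexp (↑θ * I) * I) := by
          rw [Complex.real_smul]; ring
        rw [harg, map_smul, smul_eq_mul]
      push_cast [hlin]
      linear_combination (ρ:ℂ) * cexp (-(↑θ * I)) * hpolar
        - (ρ:ℂ) * gradC u ((ρ:ℂ) * cexp (↑θ * I)) * hee
    rw [intervalIntegral.integral_congr hpt] at hmul
    have hint3 : IntervalIntegrable (fun θ : ℝ =>
        (ρ:ℂ) * (cexp (-(↑θ * I)) * (fderiv ℝ u ((ρ:ℂ) * e θ) (e θ) : ℂ)))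
        MeasureTheory.volume 0 (2*Real.pi) := by
      apply Continuous.intervalIntegrable
      exact continuous_const.mul (hene.mul (Complex.continuous_ofReal.comp
        ((hcd ρ hρr₁).clm_apply hecont)))
    have hint4 : IntervalIntegrable (fun θ : ℝ =>
        I * (cexp (-(↑θ * I)) * (fderiv ℝ u ((ρ:ℂ) * e θ) ((ρ:ℂ) * e θ * I) : ℂ)))
        MeasureTheory.volume 0 (2*Real.pi) := by
      apply Continuous.intervalIntegrable
      exact continuous_const.mul (hene.mul (Complex.continuous_ofReal.comp
        ((hcd ρ hρr₁).clm_apply ((continuous_const.mul hecont).mul continuous_const))))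
    rw [intervalIntegral.integral_sub hint3 hint4, intervalIntegral.integral_const_mul,
      intervalIntegral.integral_const_mul, c4 ρ hρr₁] at hmul
    have hgoal : Ψd ρ = ∫ θ in (0:ℝ)..(2*Real.pi),
        cexp (-(↑θ * I)) * ((fderiv ℝ u ((ρ:ℂ) * e θ)) (e θ) : ℂ) := rfl
    rw [hgoal]
    linear_combination hmul + Ψ ρ * Complex.I_mul_I
  -- assemble with the fundamental theorem of calculus
  have hΘ : ∀ x ∈ uIcc (0:ℝ) R, HasDerivAt (fun ρ : ℝ => (ρ:ℂ) * Ψ ρ)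
      ((x:ℂ) * (2 * Real.pi * gradC u 0)) x := by
    intro x hx
    rw [uIcc_of_le hR.le] at hx
    have hxR : |x| ≤ R := by
      rw [_root_.abs_of_nonneg hx.1]; exact hx.2
    have h1 : HasDerivAt (fun ρ : ℝ => (ρ:ℂ) * Ψ ρ) (Ψ x + (x:ℂ) * Ψd x) x := by
      exact ((hasDerivAt_id x).ofReal_comp.mul (c1 x hxR)).congr_deriv (by simp)
    rcases eq_or_lt_of_le hx.1 with h0 | h0
    · -- x = 0
      have hx0 : x = 0 := h0.symm
      subst hx0
      have hΨ0 : Ψ 0 = 0 := by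
        show (∫ θ in (0:ℝ)..(2*Real.pi), cexp (-(↑θ * I)) * (u (((0:ℝ):ℂ) * e θ) : ℂ)) = 0
        have heq0 : (∫ θ in (0:ℝ)..(2*Real.pi), cexp (-(↑θ * I)) * (u (((0:ℝ):ℂ) * e θ) : ℂ))
            = (∫ θ in (0:ℝ)..(2*Real.pi), cexp (-(↑θ * I))) * (u 0 : ℂ) := by
          rw [← intervalIntegral.integral_mul_const]
          apply intervalIntegral.integral_congr
          intro θ _
          simp
        rw [heq0]
        have hA : ∀ θ ∈ uIcc (0:ℝ) (2*Real.pi),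
            HasDerivAt (fun θ : ℝ => I * cexp (-(↑θ * I))) (cexp (-(↑θ * I))) θ := by
          intro θ _
          have hin : HasDerivAt (fun θ : ℝ => -(↑θ * I)) (-I) θ := by
            exact (((hasDerivAt_id θ).ofReal_comp.mul_const I).neg).congr_deriv (by simp)
          have := (hin.cexp).const_mul I
          refine this.congr_deriv ?_
          rw [show I * (cexp (-(↑θ * I)) * -I) = - (I * I) * cexp (-(↑θ*I)) by ring]
          rw [Complex.I_mul_I]; ring
        have hInt : (∫ θ in (0:ℝ)..(2*Real.pi), cexp (-(↑θ * I)))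
            = I * cexp (-(↑(2*Real.pi) * I)) - I * cexp (-(↑(0:ℝ) * I)) :=
          intervalIntegral.integral_eq_sub_of_hasDerivAt hA (hene.intervalIntegrable _ _)
        have h2pin : cexp (-(↑(2*Real.pi) * I)) = 1 := by
          have := Complex.exp_int_mul_two_pi_mul_I (-1)
          convert this using 2
          push_cast; ring
        rw [hInt, h2pin]
        norm_num
      convert h1 using 1
      rw [hΨ0]
      simp
    · -- x > 0
      have := c2 x h0 hx.2
      rw [← this]
      exact h1
  have hcont' : Continuous fun x : ℝ => (x:ℂ) * (2 * Real.pi * gradC u 0) :=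
    Complex.continuous_ofReal.mul continuous_const
  have hFTC := intervalIntegral.integral_eq_sub_of_hasDerivAt hΘ
    (hcont'.intervalIntegrable _ _)
  rw [intervalIntegral.integral_mul_const, intervalIntegral.integral_ofReal,
    integral_id] at hFTC
  norm_num at hFTC
  -- hFTC : ↑(R^2/2) * (2π g0) = ↑R * Ψ R
  have hΨRbound : ‖(Ψ R)‖ ≤ M * (2 * Real.pi) := by
    have h0 : ‖(∫ θ in (0:ℝ)..(2*Real.pi), cexp (-(↑θ * I)) * (u ((R:ℂ) * e θ) : ℂ))‖
        ≤ M * |2*Real.pi - 0| := by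
      apply intervalIntegral.norm_integral_le_of_norm_le_const
      intro θ _
      rw [norm_mul, habsen, one_mul, Complex.norm_real, Real.norm_eq_abs]
      exact hM _ (hmemB R (by rw [_root_.abs_of_pos hR]; linarith) θ)
    calc ‖(Ψ R)‖
        = ‖(∫ θ in (0:ℝ)..(2*Real.pi), cexp (-(↑θ * I)) * (u ((R:ℂ) * e θ) : ℂ))‖ := rfl
      _ ≤ M * |2*Real.pi - 0| := h0
      _ = M * (2*Real.pi) := by
          rw [sub_zero, _root_.abs_of_nonneg (by positivity : (0:ℝ) ≤ 2*Real.pi)]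
  have habs := congrArg (norm : ℂ → ℝ) hFTC
  have h1 : ‖((R:ℂ) ^ 2 / 2 * (2 * ↑Real.pi * gradC u 0))‖
      = (R^2/2) * (2*Real.pi*‖(gradC u 0)‖) := by
    rw [norm_mul, norm_div, norm_pow, norm_mul, norm_mul]
    simp [Complex.norm_real, _root_.abs_of_pos hR,
      _root_.abs_of_nonneg Real.pi_pos.le]
  have h2 : ‖((R:ℂ) * Ψ R)‖ = R * ‖(Ψ R)‖ := by
    rw [norm_mul, Complex.norm_real, Real.norm_eq_abs, _root_.abs_of_pos hR]
  rw [h1, h2] at habs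
  have hle : (R^2/2) * (2*Real.pi*‖(gradC u 0)‖) ≤ R * (M * (2*Real.pi)) := by
    rw [habs]; exact mul_le_mul_of_nonneg_left hΨRbound hR.le
  have hπ := Real.pi_pos
  rw [hRdef] at hle
  rw [le_div_iff₀ hr]
  nlinarith [hle, hπ, hr, mul_pos hπ hr]

lemma norm_fderiv_le_of_harmonic (hr : 0 < r) (hu : HarmonicOn u (ball 0 r))
    (hM : ∀ z ∈ ball (0 : ℂ) r, |u z| ≤ M) :
    ‖fderiv ℝ u 0‖ ≤ 8 * M / r := by
  have hg := gradC_abs_bound hr hu hM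
  have hre : |fderiv ℝ u 0 1| ≤ ‖(gradC u 0)‖ := by
    have : (gradC u 0).re = fderiv ℝ u 0 1 := by simp [gradC]
    rw [← this]; exact Complex.abs_re_le_norm _
  have him : |fderiv ℝ u 0 I| ≤ ‖(gradC u 0)‖ := by
    have : (gradC u 0).im = -(fderiv ℝ u 0 I) := by simp [gradC]
    calc |fderiv ℝ u 0 I| = |(gradC u 0).im| := by rw [this, abs_neg]
      _ ≤ _ := Complex.abs_im_le_norm _
  have hM0 : 0 ≤ M := (abs_nonneg _).trans (hM 0 (mem_ball_self hr))
  have hbound : ∀ w : ℂ, |fderiv ℝ u 0 w| ≤ (2 * ‖(gradC u 0)‖) * ‖w‖ := by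
    intro w
    have hw : (w.re : ℂ) + (w.im : ℂ) * I = w := Complex.re_add_im w
    have hsplit : fderiv ℝ u 0 w = w.re * fderiv ℝ u 0 1 + w.im * fderiv ℝ u 0 I := by
      conv_lhs => rw [← hw]
      have h1 : (w.re : ℂ) = w.re • (1 : ℂ) := by simp
      have h2 : (w.im : ℂ) * I = w.im • I := by simp [Complex.real_smul]
      rw [h1, h2, map_add, map_smul, map_smul, smul_eq_mul, smul_eq_mul]
    rw [hsplit]
    calc |w.re * fderiv ℝ u 0 1 + w.im * fderiv ℝ u 0 I|
        ≤ |w.re * fderiv ℝ u 0 1| + |w.im * fderiv ℝ u 0 I| := abs_add_le _ _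
      _ = |w.re| * |fderiv ℝ u 0 1| + |w.im| * |fderiv ℝ u 0 I| := by
          rw [abs_mul, abs_mul]
      _ ≤ ‖w‖ * ‖(gradC u 0)‖ + ‖w‖ * ‖(gradC u 0)‖ := by
          apply add_le_add
          · exact mul_le_mul (Complex.abs_re_le_norm w)
              hre (abs_nonneg _) (norm_nonneg _)
          · exact mul_le_mul (Complex.abs_im_le_norm w)
              him (abs_nonneg _) (norm_nonneg _)
      _ = (2 * ‖(gradC u 0)‖) * ‖w‖ := by ring
  have hop : ‖fderiv ℝ u 0‖ ≤ 2 * ‖(gradC u 0)‖ := by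
    apply ContinuousLinearMap.opNorm_le_bound _ (by positivity)
    intro w
    rw [Real.norm_eq_abs]
    exact hbound w
  calc ‖fderiv ℝ u 0‖ ≤ 2 * ‖(gradC u 0)‖ := hop
    _ ≤ 2 * (4 * M / r) := by linarith
    _ = 8 * M / r := by ring



/-- the defining predicate for the spiral angle -/
def PhiP (α s t : ℝ) (z : ℂ) (φ : ℝ) : Prop :=
  s * Real.exp (α * φ) < ‖z‖ ∧ ‖z‖ < t * Real.exp (α * φ) ∧
    z = (‖z‖ : ℂ) * cexp (↑φ * I)

/-- complex version of the spiral domain -/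
def Dc (α s t : ℝ) : Set ℂ := {z | ∃ φ : ℝ, PhiP α s t z φ}

section geom
variable {α s t : ℝ}

lemma PhiP.abs_pos {z : ℂ} {φ : ℝ} (hs : 0 < s) (h : PhiP α s t z φ) : 0 < ‖z‖ :=
  lt_trans (by positivity) h.1

lemma phi_no_jump (hα : 0 < α) (hs : 0 < s) (hkey : t < s * Real.exp (2 * Real.pi * α))
    {z : ℂ} {φ φ' : ℝ} (h : PhiP α s t z φ) (h' : PhiP α s t z φ')
    (hge : φ' + 2 * Real.pi ≤ φ) : False := by
  have h1 : ‖z‖ < t * Real.exp (α * φ') := h'.2.1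
  have h2 : s * Real.exp (α * φ) < ‖z‖ := h.1
  have h3 : s * Real.exp (α * (φ' + 2 * Real.pi)) ≤ s * Real.exp (α * φ) := by
    apply mul_le_mul_of_nonneg_left _ hs.le
    exact Real.exp_le_exp.2 (by nlinarith)
  have h4 : s * Real.exp (α * (φ' + 2 * Real.pi))
      = (s * Real.exp (2 * Real.pi * α)) * Real.exp (α * φ') := by
    rw [mul_add, Real.exp_add]; ring
  have h5 : t * Real.exp (α * φ') < (s * Real.exp (2 * Real.pi * α)) * Real.exp (α * φ') := by
    apply mul_lt_mul_of_pos_right hkey (Real.exp_pos _)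
  linarith

lemma phi_unique (hα : 0 < α) (hs : 0 < s) (hkey : t < s * Real.exp (2 * Real.pi * α))
    {z : ℂ} {φ φ' : ℝ} (h : PhiP α s t z φ) (h' : PhiP α s t z φ') : φ = φ' := by
  have habs : (0:ℝ) < ‖z‖ := h.abs_pos hs
  have hexp : cexp (↑φ * I) = cexp (↑φ' * I) := by
    have := h.2.2.symm.trans h'.2.2
    exact mul_left_cancel₀ (by exact_mod_cast habs.ne') this
  obtain ⟨n, hn⟩ := Complex.exp_eq_exp_iff_exists_int.1 hexp
  have hnr : φ = φ' + n * (2 * Real.pi) := by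
    have : (↑φ : ℂ) = ↑φ' + ↑n * (2 * ↑Real.pi) := by
      have := hn
      have hI : (I : ℂ) ≠ 0 := Complex.I_ne_zero
      apply mul_right_cancel₀ hI
      rw [this]; ring
    exact_mod_cast this
  rcases lt_trichotomy n 0 with hneg | hzero | hpos
  · exfalso
    apply phi_no_jump hα hs hkey h' h
    have hn1 : n ≤ -1 := by omega
    have : (n : ℝ) ≤ -1 := by exact_mod_cast hn1
    have hπ := Real.pi_pos
    nlinarith
  · rw [hnr, hzero]; simp
  · exfalso
    apply phi_no_jump hα hs hkey h h'
    have : (1 : ℝ) ≤ (n : ℝ) := by exact_mod_cast hpos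
    have hπ := Real.pi_pos
    nlinarith

end geom

open scoped Classical in
/-- the spiral angle function -/
noncomputable def PhiC (α s t : ℝ) (z : ℂ) : ℝ :=
  if h : ∃ φ, PhiP α s t z φ then h.choose else 0

section geom2
variable {α s t : ℝ}

lemma phiC_spec {z : ℂ} (hz : z ∈ Dc α s t) : PhiP α s t z (PhiC α s t z) := by
  have hz' : ∃ φ, PhiP α s t z φ := hz
  rw [PhiC, dif_pos hz']
  exact hz'.choose_spec

lemma phiC_eq (hα : 0 < α) (hs : 0 < s) (hkey : t < s * Real.exp (2 * Real.pi * α))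
    {z : ℂ} {φ : ℝ} (h : PhiP α s t z φ) : PhiC α s t z = φ :=
  phi_unique hα hs hkey (phiC_spec ⟨φ, h⟩) h

end geom2

section geom3
variable {α s t : ℝ}

lemma phiC_continuousOn (hα : 0 < α) (hs : 0 < s) (hts : 0 < t)
    (hkey : t < s * Real.exp (2 * Real.pi * α)) :
    ContinuousOn (PhiC α s t) (Dc α s t) := by
  intro z₀ hz₀
  have hspec := phiC_spec hz₀
  set φ₀ := PhiC α s t z₀ with hφ₀
  have hπ := Real.pi_pos
  -- the admissible angular slack η
  have hκ : 1 < s * Real.exp (2 * Real.pi * α) / t := by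
    rw [lt_div_iff₀ hts]; linarith
  set η : ℝ := Real.log (s * Real.exp (2 * Real.pi * α) / t) / (2 * α) with hηdef
  have hηpos : 0 < η := div_pos (Real.log_pos hκ) (by linarith)
  have hηκ : Real.exp (α * η) * t ≤ s * Real.exp (2 * Real.pi * α) := by
    have hL : 0 < Real.log (s * Real.exp (2 * Real.pi * α) / t) := Real.log_pos hκ
    have h1 : α * η ≤ Real.log (s * Real.exp (2 * Real.pi * α) / t) := by
      have : α * η = Real.log (s * Real.exp (2 * Real.pi * α) / t) / 2 := by
        rw [hηdef]; field_simp
      rw [this]; linarith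
    have h2 : Real.exp (α * η) ≤ s * Real.exp (2 * Real.pi * α) / t := by
      calc Real.exp (α * η) ≤ Real.exp (Real.log (s * Real.exp (2 * Real.pi * α) / t)) :=
            Real.exp_le_exp.2 h1
        _ = _ := Real.exp_log (by positivity)
    calc Real.exp (α * η) * t ≤ (s * Real.exp (2 * Real.pi * α) / t) * t :=
          mul_le_mul_of_nonneg_right h2 hts.le
      _ = s * Real.exp (2 * Real.pi * α) := by field_simp
  -- the comparison function ψ
  set w : ℂ → ℂ := fun z => z * cexp (-(↑φ₀ * I)) with hw
  set ψ : ℂ → ℝ := fun z => φ₀ + Complex.arg (w z) with hψ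
  have habs0 : (0:ℝ) < ‖z₀‖ := hspec.abs_pos hs
  have hwz₀ : w z₀ = (‖z₀‖ : ℂ) := by
    rw [hw]
    simp only
    conv_lhs => rw [hspec.2.2]
    rw [mul_assoc, ← Complex.exp_add]
    simp
  have hψz₀ : ψ z₀ = φ₀ := by
    rw [hψ]; simp only
    rw [hwz₀, Complex.arg_ofReal_of_nonneg habs0.le, add_zero]
  have hwcont : Continuous w := continuous_id.mul continuous_const
  have hψcont : ContinuousAt ψ z₀ := by
    apply ContinuousAt.add continuousAt_const
    apply (Complex.continuousAt_arg ?_).comp hwcont.continuousAt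
    rw [hwz₀]
    exact Complex.mem_slitPlane_iff.2 (Or.inl (by simpa using habs0))
  -- eventual facts near z₀
  have hev1 : ∀ᶠ z in 𝓝 z₀, |ψ z - φ₀| < η := by
    have htd := hψcont.tendsto
    rw [hψz₀] at htd
    filter_upwards [Metric.tendsto_nhds.1 htd η hηpos] with z hz
    rwa [Real.dist_eq] at hz
  have hev2 : ∀ᶠ z in 𝓝 z₀, ‖z‖ < t * Real.exp (α * φ₀) :=
    continuous_norm.continuousAt.eventually_lt_const hspec.2.1
  have hev3 : ∀ᶠ z in 𝓝 z₀, s * Real.exp (α * φ₀) < ‖z‖ :=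
    continuous_norm.continuousAt.eventually_const_lt hspec.1
  -- eventual equality of PhiC and ψ on the domain
  have heq : ∀ᶠ z in 𝓝[Dc α s t] z₀, PhiC α s t z = ψ z := by
    filter_upwards [eventually_nhdsWithin_of_eventually_nhds (hev1.and (hev2.and hev3)),
      self_mem_nhdsWithin] with z hz hzD
    obtain ⟨hz1, hz2, hz3⟩ := hz
    have hzspec := phiC_spec hzD
    have habsz : (0:ℝ) < ‖z‖ := hzspec.abs_pos hs
    have habszne : (‖z‖ : ℂ) ≠ 0 := by exact_mod_cast habsz.ne'
    have hexp : cexp (↑(PhiC α s t z) * I) = cexp (↑(ψ z) * I) := by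
      have h1 : cexp (↑(PhiC α s t z) * I) = z / ↑(‖z‖) := by
        rw [eq_div_iff habszne]
        conv_rhs => rw [hzspec.2.2]
        ring
      have h2 : cexp (↑(ψ z) * I) = z / ↑(‖z‖) := by
        have hargw : (‖(w z)‖ : ℂ) * cexp (↑(Complex.arg (w z)) * I) = w z :=
          Complex.norm_mul_exp_arg_mul_I (w z)
        have habsw : ‖(w z)‖ = ‖z‖ := by
          rw [hw]; simp only [norm_mul]
          have : ‖(cexp (-(↑φ₀ * I)))‖ = 1 := by
            have := Complex.norm_exp_ofReal_mul_I (-φ₀)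
            convert this using 2
            push_cast; ring
          rw [this, mul_one]
        rw [hψ]; simp only
        rw [Complex.ofReal_add, add_mul, Complex.exp_add]
        rw [eq_div_iff habszne]
        have hwexp : cexp (↑(Complex.arg (w z)) * I) = w z / ↑(‖z‖) := by
          rw [eq_div_iff habszne, ← habsw]
          conv_rhs => rw [← hargw]
          ring
        have hargw' : (‖z‖ : ℂ) * cexp (↑(Complex.arg (w z)) * I) = w z := by
          rw [← habsw]; exact hargw
        calc cexp (↑φ₀ * I) * cexp (↑(Complex.arg (w z)) * I) * ↑(‖z‖)
            = cexp (↑φ₀ * I) * ((‖z‖ : ℂ) * cexp (↑(Complex.arg (w z)) * I)) := by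
              ring
          _ = cexp (↑φ₀ * I) * w z := by rw [hargw']
          _ = z * (cexp (↑φ₀ * I) * cexp (-(↑φ₀ * I))) := by rw [hw]; ring
          _ = z := by rw [← Complex.exp_add]; simp
      rw [h1, h2]
    obtain ⟨n, hn⟩ := Complex.exp_eq_exp_iff_exists_int.1 hexp
    have hnr : PhiC α s t z = ψ z + n * (2 * Real.pi) := by
      have hI : (I:ℂ) ≠ 0 := Complex.I_ne_zero
      have : (↑(PhiC α s t z) : ℂ) = ↑(ψ z) + ↑n * (2 * ↑Real.pi) := by
        apply mul_right_cancel₀ hI; rw [hn]; ring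
      exact_mod_cast this
    obtain ⟨hψgt', hψlt'⟩ := abs_lt.1 hz1
    have hψlt : ψ z < φ₀ + η := by linarith
    have hψgt : φ₀ - η < ψ z := by linarith
    rcases lt_trichotomy n 0 with hneg | h0 | hpos
    · exfalso
      have hn1 : (n:ℝ) ≤ -1 := by exact_mod_cast (by omega : n ≤ -1)
      have hup : PhiC α s t z ≤ ψ z - 2 * Real.pi := by nlinarith
      have e1 : Real.exp (α * PhiC α s t z) ≤ Real.exp (α * (φ₀ + η - 2 * Real.pi)) :=
        Real.exp_le_exp.2 (by nlinarith)
      have e2 : t * Real.exp (α * (φ₀ + η - 2 * Real.pi)) ≤ s * Real.exp (α * φ₀) := by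
        have hid : Real.exp (α * (φ₀ + η - 2 * Real.pi))
            = Real.exp (α * η) * Real.exp (-(2 * Real.pi * α)) * Real.exp (α * φ₀) := by
          rw [← Real.exp_add, ← Real.exp_add]; ring_nf
        rw [hid]
        have hmul := mul_le_mul_of_nonneg_right hηκ
          (le_of_lt (mul_pos (Real.exp_pos (-(2 * Real.pi * α))) (Real.exp_pos (α * φ₀))))
        calc t * (Real.exp (α * η) * Real.exp (-(2 * Real.pi * α)) * Real.exp (α * φ₀))
            = (Real.exp (α * η) * t) * (Real.exp (-(2 * Real.pi * α)) * Real.exp (α * φ₀)) := by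
              ring
          _ ≤ (s * Real.exp (2 * Real.pi * α)) * (Real.exp (-(2 * Real.pi * α))
              * Real.exp (α * φ₀)) := hmul
          _ = s * (Real.exp (2 * Real.pi * α) * Real.exp (-(2 * Real.pi * α)))
              * Real.exp (α * φ₀) := by ring
          _ = s * Real.exp (α * φ₀) := by rw [← Real.exp_add]; simp
      have hchain : ‖z‖ < s * Real.exp (α * φ₀) := by
        calc ‖z‖ < t * Real.exp (α * PhiC α s t z) := hzspec.2.1
          _ ≤ t * Real.exp (α * (φ₀ + η - 2 * Real.pi)) := mul_le_mul_of_nonneg_left e1 hts.le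
          _ ≤ s * Real.exp (α * φ₀) := e2
      linarith
    · rw [hnr, h0]; simp
    · exfalso
      have hn1 : (1:ℝ) ≤ (n:ℝ) := by exact_mod_cast hpos
      have hup : ψ z + 2 * Real.pi ≤ PhiC α s t z := by nlinarith
      have e1 : Real.exp (α * (φ₀ - η + 2 * Real.pi)) ≤ Real.exp (α * PhiC α s t z) :=
        Real.exp_le_exp.2 (by nlinarith)
      have e2 : t * Real.exp (α * φ₀) ≤ s * Real.exp (α * (φ₀ - η + 2 * Real.pi)) := by
        have hid : Real.exp (α * (φ₀ - η + 2 * Real.pi))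
            = Real.exp (-(α * η)) * Real.exp (2 * Real.pi * α) * Real.exp (α * φ₀) := by
          rw [← Real.exp_add, ← Real.exp_add]; ring_nf
        rw [hid]
        have hmul := mul_le_mul_of_nonneg_right hηκ (Real.exp_pos (-(α * η))).le
        have ht' : t ≤ s * Real.exp (2 * Real.pi * α) * Real.exp (-(α * η)) := by
          calc t = Real.exp (α * η) * t * Real.exp (-(α * η)) := by
                rw [mul_comm (Real.exp (α * η)) t, mul_assoc, ← Real.exp_add]; simp
            _ ≤ _ := hmul
        calc t * Real.exp (α * φ₀)
            ≤ (s * Real.exp (2 * Real.pi * α) * Real.exp (-(α * η))) * Real.exp (α * φ₀) :=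
              mul_le_mul_of_nonneg_right ht' (Real.exp_pos _).le
          _ = s * (Real.exp (-(α * η)) * Real.exp (2 * Real.pi * α) * Real.exp (α * φ₀)) := by
              ring
      have hchain : t * Real.exp (α * φ₀) < ‖z‖ := by
        calc t * Real.exp (α * φ₀) ≤ s * Real.exp (α * (φ₀ - η + 2 * Real.pi)) := e2
          _ ≤ s * Real.exp (α * PhiC α s t z) := mul_le_mul_of_nonneg_left e1 hs.le
          _ < ‖z‖ := hzspec.1
      linarith
  exact (hψcont.continuousWithinAt).congr_of_eventuallyEq heq (by rw [hψz₀])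
end geom3

/-- main geometric bound: a connected subset of the spiral domain avoiding the
vertical line `re = c` and meeting the unit ball around `a` is bounded. -/
lemma geom_bound (hα : 0 < α) (hs : 0 < s) (hts : 0 < t)
    (hkey : t < s * Real.exp (2 * Real.pi * α)) (a : ℂ) (c : ℝ) :
    ∃ M : ℝ, 0 < M ∧ ∀ A : Set ℂ, A ⊆ Dc α s t → IsPreconnected A →
      ((∀ z ∈ A, z.re < c) ∨ (∀ z ∈ A, c < z.re)) →
      ∀ p ∈ A, ‖(p - a)‖ ≤ 1 → ∀ q ∈ A, ‖q‖ ≤ M := by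
  have hπ := Real.pi_pos
  set B₁ : ℝ := Real.log ((‖a‖ + 1) / s) / α + 1 with hB₁def
  set B₃ : ℝ := max B₁ (Real.log ((|c| + 1) / s) / α) with hB₃def
  set B : ℝ := B₃ + 4 * Real.pi + 1 with hBdef
  refine ⟨t * Real.exp (α * B), by positivity, ?_⟩
  intro A hAsub hAconn hside p hp hpa q hq
  -- the angle of p is bounded above by B₁
  have hpD : p ∈ Dc α s t := hAsub hp
  have hpspec := phiC_spec hpD
  have hB₁p : PhiC α s t p < B₁ := by
    have habsp : ‖p‖ ≤ ‖a‖ + 1 := by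
      calc ‖p‖ = ‖(a + (p - a))‖ := by ring_nf
        _ ≤ ‖a‖ + ‖(p - a)‖ := norm_add_le _ _
        _ ≤ ‖a‖ + 1 := by linarith
    have h1 : s * Real.exp (α * PhiC α s t p) < ‖a‖ + 1 :=
      lt_of_lt_of_le hpspec.1 habsp
    have h2 : Real.exp (α * PhiC α s t p) < (‖a‖ + 1) / s := by
      rw [lt_div_iff₀ hs]; linarith [h1]
    have h3 : α * PhiC α s t p < Real.log ((‖a‖ + 1) / s) := by
      have := Real.log_lt_log (Real.exp_pos _) h2
      rwa [Real.log_exp] at this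
    rw [hB₁def]
    rw [div_add' _ _ _ hα.ne']
    rw [lt_div_iff₀ hα]
    nlinarith
  have hB₃mono : ∀ θ : ℝ, B₃ ≤ θ → |c| + 1 ≤ s * Real.exp (α * θ) := by
    intro θ hθ
    have h1 : Real.log ((|c| + 1) / s) / α ≤ θ := le_trans (le_max_right _ _) hθ
    have h2 : Real.log ((|c| + 1) / s) ≤ α * θ := by
      rw [div_le_iff₀ hα] at h1; linarith
    have h3 : (|c| + 1) / s ≤ Real.exp (α * θ) := by
      calc (|c| + 1) / s = Real.exp (Real.log ((|c| + 1) / s)) := by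
            rw [Real.exp_log (by positivity)]
        _ ≤ Real.exp (α * θ) := Real.exp_le_exp.2 h2
    calc |c| + 1 = ((|c| + 1) / s) * s := by field_simp
      _ ≤ Real.exp (α * θ) * s := mul_le_mul_of_nonneg_right h3 hs.le
      _ = s * Real.exp (α * θ) := by ring
  -- suffices: the angle of q is at most B
  have hqD : q ∈ Dc α s t := hAsub hq
  have hqspec := phiC_spec hqD
  by_contra hcon
  push_neg at hcon
  have hqB : B < PhiC α s t q := by
    by_contra hqB
    push_neg at hqB
    have : ‖q‖ < t * Real.exp (α * B) :=
      lt_of_lt_of_le hqspec.2.1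
        (mul_le_mul_of_nonneg_left (Real.exp_le_exp.2 (by nlinarith)) hts.le)
    linarith
  -- IVT on the continuous angle function
  have hcontA : ContinuousOn (PhiC α s t) A :=
    (phiC_continuousOn hα hs hts hkey).mono hAsub
  have hIVT := hAconn.intermediate_value hp hq hcontA
  -- choose the target angle τ
  rcases hside with hlt | hgt
  · -- re < c on A : use angle 2πn
    set n : ℤ := ⌈B₃ / (2 * Real.pi)⌉ with hndef
    set τ : ℝ := 2 * Real.pi * n with hτdef
    have hτ1 : B₃ ≤ τ := by
      have := Int.le_ceil (B₃ / (2 * Real.pi))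
      rw [hτdef, hndef]
      rw [div_le_iff₀ (by positivity : (0:ℝ) < 2 * Real.pi)] at this
      linarith
    have hτ2 : τ ≤ B₃ + 2 * Real.pi := by
      have := Int.ceil_lt_add_one (B₃ / (2 * Real.pi))
      rw [hτdef, hndef]
      have h2 : (⌈B₃ / (2 * Real.pi)⌉ : ℝ) < B₃ / (2 * Real.pi) + 1 := this
      have := mul_lt_mul_of_pos_left h2 (by positivity : (0:ℝ) < 2 * Real.pi)
      rw [mul_add, mul_div_cancel₀ _ (by positivity : (2 * Real.pi) ≠ 0)] at this
      linarith
    have hτmem : τ ∈ Icc (PhiC α s t p) (PhiC α s t q) := by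
      constructor
      · calc PhiC α s t p ≤ B₁ := hB₁p.le
          _ ≤ B₃ := le_max_left _ _
          _ ≤ τ := hτ1
      · calc τ ≤ B₃ + 2 * Real.pi := hτ2
          _ ≤ B := by rw [hBdef]; linarith
          _ ≤ PhiC α s t q := hqB.le
    obtain ⟨x, hxA, hxτ⟩ := hIVT hτmem
    have hxD : x ∈ Dc α s t := hAsub hxA
    have hxspec := phiC_spec hxD
    rw [hxτ] at hxspec
    have hexpτ : cexp (↑τ * I) = 1 := by
      have := Complex.exp_int_mul_two_pi_mul_I n
      rw [← this]
      congr 1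
      push_cast [hτdef]
      ring
    have hxval : x = (‖x‖ : ℂ) := by
      conv_lhs => rw [hxspec.2.2]
      rw [hexpτ, mul_one]
    have hxre : x.re = ‖x‖ := by
      conv_lhs => rw [hxval]
      simp
    have hbig : |c| + 1 ≤ ‖x‖ := by
      calc |c| + 1 ≤ s * Real.exp (α * τ) := hB₃mono τ hτ1
        _ ≤ ‖x‖ := hxspec.1.le
    have := hlt x hxA
    rw [hxre] at this
    have : |c| + 1 ≤ c := le_trans hbig this.le
    have := le_abs_self c
    linarith
  · -- re > c on A : use angle π + 2πn
    set n : ℤ := ⌈(B₃ - Real.pi) / (2 * Real.pi)⌉ with hndef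
    set τ : ℝ := Real.pi + 2 * Real.pi * n with hτdef
    have hτ1 : B₃ ≤ τ := by
      have := Int.le_ceil ((B₃ - Real.pi) / (2 * Real.pi))
      rw [hτdef, hndef]
      rw [div_le_iff₀ (by positivity : (0:ℝ) < 2 * Real.pi)] at this
      linarith
    have hτ2 : τ ≤ B₃ + 2 * Real.pi + Real.pi := by
      have h2 : (⌈(B₃ - Real.pi) / (2 * Real.pi)⌉ : ℝ) < (B₃ - Real.pi) / (2 * Real.pi) + 1 :=
        Int.ceil_lt_add_one _
      rw [hτdef, hndef]
      have := mul_lt_mul_of_pos_left h2 (by positivity : (0:ℝ) < 2 * Real.pi)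
      rw [mul_add, mul_div_cancel₀ _ (by positivity : (2 * Real.pi) ≠ 0)] at this
      linarith
    have hτmem : τ ∈ Icc (PhiC α s t p) (PhiC α s t q) := by
      constructor
      · calc PhiC α s t p ≤ B₁ := hB₁p.le
          _ ≤ B₃ := le_max_left _ _
          _ ≤ τ := hτ1
      · calc τ ≤ B₃ + 2 * Real.pi + Real.pi := hτ2
          _ ≤ B := by rw [hBdef]; linarith
          _ ≤ PhiC α s t q := hqB.le
    obtain ⟨x, hxA, hxτ⟩ := hIVT hτmem
    have hxD : x ∈ Dc α s t := hAsub hxA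
    have hxspec := phiC_spec hxD
    rw [hxτ] at hxspec
    have hexpτ : cexp (↑τ * I) = -1 := by
      have h1 := Complex.exp_int_mul_two_pi_mul_I n
      have : cexp (↑τ * I) = cexp (↑Real.pi * I) * cexp (↑n * (2 * ↑Real.pi * I)) := by
        rw [← Complex.exp_add]
        congr 1
        push_cast [hτdef]
        ring
      rw [this, h1, Complex.exp_pi_mul_I, mul_one]
    have hxval : x = -(‖x‖ : ℂ) := by
      conv_lhs => rw [hxspec.2.2]
      rw [hexpτ]
      ring
    have hxre : x.re = -‖x‖ := by
      conv_lhs => rw [hxval]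
      simp
    have hbig : |c| + 1 ≤ ‖x‖ := by
      calc |c| + 1 ≤ s * Real.exp (α * τ) := hB₃mono τ hτ1
        _ ≤ ‖x‖ := hxspec.1.le
    have := hgt x hxA
    rw [hxre] at this
    have := neg_abs_le c
    linarith


/-- points of `setC` lie in the complex spiral domain -/
lemma memDc_of_setC {α s t : ℝ} (hs : 0 < s) {q : ℝ × ℝ} (hq : q ∈ setC α s t) :
    (↑q.1 + ↑q.2 * I : ℂ) ∈ Dc α s t := by
  obtain ⟨r, φ, h1, h2, h3⟩ := hq
  have hr0 : 0 < r := lt_trans (by positivity) h1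
  have hq1 : q.1 = r * Real.cos φ := by rw [h3]
  have hq2 : q.2 = r * Real.sin φ := by rw [h3]
  have hce : cexp (↑φ * I) = (Real.cos φ : ℂ) + (Real.sin φ : ℂ) * I := by
    rw [Complex.exp_mul_I, Complex.ofReal_cos, Complex.ofReal_sin]
  have hz : (↑q.1 + ↑q.2 * I : ℂ) = (r : ℂ) * cexp (↑φ * I) := by
    rw [hq1, hq2, hce]
    push_cast
    ring
  have habs : ‖(↑q.1 + ↑q.2 * I : ℂ)‖ = r := by
    rw [hz, norm_mul, Complex.norm_real, Complex.norm_exp_ofReal_mul_I, Real.norm_eq_abs,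
      _root_.abs_of_pos hr0, mul_one]
  exact ⟨φ, by rw [habs]; exact h1, by rw [habs]; exact h2, by rw [habs]; exact hz⟩

/-- Level-set properties (Proposition 2.1 of the paper) for a degenerating sequence of
harmonic maps into `C_{α,s,t}`: (i) every value `c` is attained by the first component
`u_k` for all large `k`; (ii) the level set `{u_k = c}` approaches the origin. -/
theorem levelSets_C (α s t : ℝ) (hα : 0 < α) (ht : 0 < t)
    (hst : Real.exp (-(2 * Real.pi * α)) * t < s) (hst' : s < t)
    (a : ℝ × ℝ) (ha : a ∈ setC α s t) (f : ℕ → ℂ → ℝ × ℝ)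
    (hharm : ∀ k, HarmonicMapOn (f k) (ball (0 : ℂ) 1))
    (hmaps : ∀ k, MapsTo (f k) (ball (0 : ℂ) 1) (setC α s t))
    (hconv : Tendsto (fun k => f k 0) atTop (𝓝 a))
    (hblow : Tendsto (fun k => ‖fderiv ℝ (f k) 0‖) atTop atTop) :
    ∀ c : ℝ,
      (∃ K : ℕ, ∀ k ≥ K, ∃ z ∈ ball (0 : ℂ) 1, (f k z).1 = c) ∧
      (∀ ε > (0 : ℝ), ∃ K : ℕ, ∀ k ≥ K,
        ∃ z ∈ ball (0 : ℂ) 1, ‖z‖ < ε ∧ (f k z).1 = c) := by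
  have hs : 0 < s := lt_trans (by positivity) hst
  have hkey : t < s * Real.exp (2 * Real.pi * α) := by
    have h1 : (Real.exp (-(2 * Real.pi * α)) * t) * Real.exp (2 * Real.pi * α)
        < s * Real.exp (2 * Real.pi * α) :=
      mul_lt_mul_of_pos_right hst (Real.exp_pos _)
    calc t = (Real.exp (-(2 * Real.pi * α)) * t) * Real.exp (2 * Real.pi * α) := by
          rw [mul_comm (Real.exp _) t, mul_assoc, ← Real.exp_add]; simp
      _ < s * Real.exp (2 * Real.pi * α) := h1
  intro c
  -- the geometric bound
  obtain ⟨M, hM0, hMbound⟩ := geom_bound hα hs ht hkey (↑a.1 + ↑a.2 * I : ℂ) c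
  -- the deterministic gradient bound
  have hdet : ∀ ε : ℝ, 0 < ε → ε ≤ 1 → ∀ k : ℕ, dist (f k 0) a ≤ 1/2 →
      (∀ z ∈ ball (0:ℂ) ε, (f k z).1 ≠ c) → ‖fderiv ℝ (f k) 0‖ ≤ 8 * M / ε := by
    intro ε hε hε1 k hdist hne
    set g := f k with hg
    set u := fun z => (g z).1 with hu
    set v := fun z => (g z).2 with hv
    have hharmu : HarmonicOn u (ball (0:ℂ) 1) := (hharm k).1
    have hharmv : HarmonicOn v (ball (0:ℂ) 1) := (hharm k).2
    have hεsub : ball (0:ℂ) ε ⊆ ball 0 1 := ball_subset_ball hε1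
    have hucont : ContinuousOn u (ball (0:ℂ) ε) := (hharmu.1.continuousOn).mono hεsub
    have hvcont : ContinuousOn v (ball (0:ℂ) ε) := (hharmv.1.continuousOn).mono hεsub
    set h : ℂ → ℂ := fun z => (↑(u z) + ↑(v z) * I : ℂ) with hh
    have hhcont : ContinuousOn h (ball (0:ℂ) ε) := by
      apply ContinuousOn.add
      · exact Complex.continuous_ofReal.comp_continuousOn hucont
      · exact ContinuousOn.mul (Complex.continuous_ofReal.comp_continuousOn hvcont)
          continuousOn_const
    set A : Set ℂ := h '' (ball (0:ℂ) ε) with hA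
    have hAconn : IsPreconnected A :=
      ((convex_ball (0:ℂ) ε).isPreconnected).image h hhcont
    have hAsub : A ⊆ Dc α s t := by
      rintro _ ⟨z, hz, rfl⟩
      exact memDc_of_setC hs (hmaps k (hεsub hz))
    have hball0 : (0:ℂ) ∈ ball (0:ℂ) ε := mem_ball_self hε
    -- dichotomy
    have hdich : (∀ w ∈ A, w.re < c) ∨ (∀ w ∈ A, c < w.re) := by
      have hre : ∀ z : ℂ, (h z).re = u z := by intro z; simp [hh]
      rcases lt_trichotomy (u 0) c with h0 | h0 | h0
      · left
        rintro _ ⟨z, hz, rfl⟩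
        rw [hre]
        by_contra hge
        push_neg at hge
        have hlt : c < u z := lt_of_le_of_ne hge (Ne.symm (hne z hz))
        have := ((convex_ball (0:ℂ) ε).isPreconnected).intermediate_value hball0 hz hucont
        obtain ⟨y, hy, hyc⟩ := this ⟨h0.le, hlt.le⟩
        exact hne y hy hyc
      · exact absurd h0 (hne 0 hball0)
      · right
        rintro _ ⟨z, hz, rfl⟩
        rw [hre]
        by_contra hge
        push_neg at hge
        have hlt : u z < c := lt_of_le_of_ne hge (hne z hz)
        have := ((convex_ball (0:ℂ) ε).isPreconnected).intermediate_value hz hball0 hucont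
        obtain ⟨y, hy, hyc⟩ := this ⟨hlt.le, h0.le⟩
        exact hne y hy hyc
    -- the basepoint is close to a
    have hpA : h 0 ∈ A := mem_image_of_mem h hball0
    have hpa : ‖(h 0 - (↑a.1 + ↑a.2 * I))‖ ≤ 1 := by
      have hd1 : |u 0 - a.1| ≤ 1/2 := by
        have h1 : dist (u 0) a.1 ≤ dist (g 0) a := by
          rw [Prod.dist_eq]; exact le_max_left _ _
        rw [Real.dist_eq] at h1
        linarith [le_trans h1 hdist]
      have hd2 : |v 0 - a.2| ≤ 1/2 := by
        have h1 : dist (v 0) a.2 ≤ dist (g 0) a := by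
          rw [Prod.dist_eq]; exact le_max_right _ _
        rw [Real.dist_eq] at h1
        linarith [le_trans h1 hdist]
      have hsplit : h 0 - (↑a.1 + ↑a.2 * I) = ↑(u 0 - a.1) + ↑(v 0 - a.2) * I := by
        rw [hh]; push_cast; ring
      rw [hsplit]
      calc ‖(↑(u 0 - a.1) + ↑(v 0 - a.2) * I)‖
          ≤ ‖(↑(u 0 - a.1) : ℂ)‖ + ‖((↑(v 0 - a.2) : ℂ) * I)‖ :=
            norm_add_le _ _
        _ = |u 0 - a.1| + |v 0 - a.2| := by
            rw [Complex.norm_real, norm_mul, Complex.norm_real, Complex.norm_I, mul_one, Real.norm_eq_abs, Real.norm_eq_abs]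
        _ ≤ 1 := by linarith
    have hbound := hMbound A hAsub hAconn hdich (h 0) hpA hpa
    have hMu : ∀ z ∈ ball (0:ℂ) ε, |u z| ≤ M := by
      intro z hz
      have hb := hbound (h z) (mem_image_of_mem h hz)
      have hre : (h z).re = u z := by simp [hh]
      calc |u z| = |(h z).re| := by rw [hre]
        _ ≤ ‖(h z)‖ := Complex.abs_re_le_norm _
        _ ≤ M := hb
    have hMv : ∀ z ∈ ball (0:ℂ) ε, |v z| ≤ M := by
      intro z hz
      have hb := hbound (h z) (mem_image_of_mem h hz)
      have him : (h z).im = v z := by simp [hh]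
      calc |v z| = |(h z).im| := by rw [him]
        _ ≤ ‖(h z)‖ := Complex.abs_im_le_norm _
        _ ≤ M := hb
    have hharmuε : HarmonicOn u (ball (0:ℂ) ε) :=
      ⟨hharmu.1.mono hεsub, fun z hz => hharmu.2 z (hεsub hz)⟩
    have hharmvε : HarmonicOn v (ball (0:ℂ) ε) :=
      ⟨hharmv.1.mono hεsub, fun z hz => hharmv.2 z (hεsub hz)⟩
    have hgu := norm_fderiv_le_of_harmonic hε hharmuε hMu
    have hgv := norm_fderiv_le_of_harmonic hε hharmvε hMv
    have hud : DifferentiableAt ℝ u 0 :=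
      (hharmu.1.differentiableOn (by norm_num)).differentiableAt
        (isOpen_ball.mem_nhds (mem_ball_self one_pos))
    have hvd : DifferentiableAt ℝ v 0 :=
      (hharmv.1.differentiableOn (by norm_num)).differentiableAt
        (isOpen_ball.mem_nhds (mem_ball_self one_pos))
    have hpair : HasFDerivAt g ((fderiv ℝ u 0).prod (fderiv ℝ v 0)) 0 :=
      hud.hasFDerivAt.prodMk hvd.hasFDerivAt
    rw [hpair.fderiv, ContinuousLinearMap.opNorm_prod, Prod.norm_def]
    exact max_le hgu hgv
  -- the key claim
  have key : ∀ ε : ℝ, 0 < ε → ε ≤ 1 → ∃ K : ℕ, ∀ k ≥ K,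
      ∃ z ∈ ball (0:ℂ) 1, ‖z‖ < ε ∧ (f k z).1 = c := by
    intro ε hε hε1
    by_contra hcon
    push_neg at hcon
    have hev1 : ∀ᶠ k in atTop, dist (f k 0) a ≤ 1/2 := by
      have hmem := hconv (Metric.closedBall_mem_nhds a (by norm_num : (0:ℝ) < 1/2))
      filter_upwards [hmem] with k hk
      exact mem_closedBall.1 hk
    have hev2 : ∀ᶠ k in atTop, 8 * M / ε < ‖fderiv ℝ (f k) 0‖ := hblow.eventually_gt_atTop _
    obtain ⟨K, hK⟩ := eventually_atTop.1 (hev1.and hev2)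
    obtain ⟨k, hkK, hknot⟩ := hcon K
    obtain ⟨hd, hb⟩ := hK k hkK
    have hne : ∀ z ∈ ball (0:ℂ) ε, (f k z).1 ≠ c := by
      intro z hz
      have hz1 : z ∈ ball (0:ℂ) 1 := ball_subset_ball hε1 hz
      have habs : ‖z‖ < ε := by
        exact mem_ball_zero_iff.1 hz
      exact hknot z hz1 habs
    have := hdet ε hε hε1 k hd hne
    linarith
  constructor
  · obtain ⟨K, hK⟩ := key 1 one_pos le_rfl
    refine ⟨K, fun k hk => ?_⟩
    obtain ⟨z, hz, _, hzc⟩ := hK k hk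
    exact ⟨z, hz, hzc⟩
  · intro ε hε
    obtain ⟨K, hK⟩ := key (min ε 1) (lt_min hε one_pos) (min_le_right _ _)
    refine ⟨K, fun k hk => ?_⟩
    obtain ⟨z, hz, habs, hzc⟩ := hK k hk
    exact ⟨z, hz, lt_of_lt_of_le habs (min_le_left _ _), hzc⟩
end

section
/- Let α>0 with α≠1, s<0, t>0, and let c ∈ ℝ. Set D₋ = A_{α,s,t} ∩ {x₁ < c} and D₊ = A_{α,s,t} ∩ {x₁ > c}. Then each of the tube domains T_{D₋} and T_{D₊} (when the base is nonempty) satisfies: for every point w there exist a neighborhood U of w and a constant M>0 such that every holomorphic map f: Δ → T_{D₋} (respectively T_{D₊}) with f(0) ∈ U satisfies ‖f'(0)‖ < M; i.e., T_{D₋} and T_{D₊} are Kobayashi-hyperbolic. -/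
open Complex Metric Set Filter Topology

/-- The tube domain over a base `D ⊆ ℝ²`. -/
def tube (D : Set (ℝ × ℝ)) : Set (ℂ × ℂ) := {z | (z.1.re, z.2.re) ∈ D}

/-- Kobayashi hyperbolicity of a domain `T ⊆ ℂ²`, stated as the local uniform bound on
derivatives at `0` of holomorphic maps from the unit disk into `T`. -/
def IsHyperbolic (T : Set (ℂ × ℂ)) : Prop :=
  ∀ w ∈ T, ∃ U ⊆ T, U ∈ 𝓝 w ∧ ∃ M > (0 : ℝ),
    ∀ f : ℂ → ℂ × ℂ, DifferentiableOn ℂ f (ball (0 : ℂ) 1) →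
      MapsTo f (ball (0 : ℂ) 1) T → f 0 ∈ U → ‖fderiv ℂ f 0‖ < M

/-- Half-plane Schwarz-type derivative bound via `exp`. -/
lemma halfplane_deriv_bound {g : ℂ → ℂ} {r C : ℝ} (hr : 0 < r)
    (hg : DifferentiableOn ℂ g (ball 0 r))
    (hb : ∀ z ∈ ball (0:ℂ) r, (g z).re < C) :
    ‖deriv g 0‖ ≤ 2 / r * Real.exp (C - (g 0).re) := by
  set h : ℂ → ℂ := fun z => Complex.exp (g z - C) with hh
  have h0 : (0:ℂ) ∈ ball (0:ℂ) r := mem_ball_self hr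
  have hd : DifferentiableOn ℂ h (ball 0 r) := by
    exact (hg.sub_const _).cexp
  have habs : ∀ z ∈ ball (0:ℂ) r, ‖h z‖ < 1 := by
    intro z hz
    rw [hh]
    simp only [Complex.norm_exp]
    have : (g z - C).re < 0 := by
      simp [Complex.sub_re]
      linarith [hb z hz]
    calc Real.exp (g z - C).re < Real.exp 0 := Real.exp_lt_exp.2 this
    _ = 1 := Real.exp_zero
  have hmaps : MapsTo h (ball 0 r) (ball (h 0) 2) := by
    intro z hz
    rw [mem_ball]
    calc dist (h z) (h 0) ≤ ‖h z‖ + ‖h 0‖ := by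
          rw [dist_eq_norm]; exact norm_sub_le _ _
    _ < 1 + 1 := add_lt_add (habs z hz) (habs 0 h0)
    _ = 2 := by ring
  have hder : ‖deriv h 0‖ ≤ 2 / r := Complex.norm_deriv_le_div_of_mapsTo_ball hd (hmaps.mono_right ball_subset_closedBall) hr
  have hga : DifferentiableAt ℂ g 0 := hg.differentiableAt (ball_mem_nhds _ hr)
  have hderh : deriv h 0 = Complex.exp (g 0 - C) * deriv g 0 := by
    rw [hh]
    rw [deriv_cexp (hga.sub_const _)]
    rw [deriv_sub_const]
  have : ‖deriv h 0‖ = Real.exp ((g 0).re - C) * ‖deriv g 0‖ := by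
    rw [hderh]
    simp [Complex.norm_exp, Complex.sub_re]
  rw [this] at hder
  calc ‖deriv g 0‖ = Real.exp (C - (g 0).re) * (Real.exp ((g 0).re - C) * ‖deriv g 0‖) := by
        rw [← mul_assoc, ← Real.exp_add]; simp
  _ ≤ Real.exp (C - (g 0).re) * (2 / r) := by
        exact mul_le_mul_of_nonneg_left hder (Real.exp_pos _).le
  _ = 2 / r * Real.exp (C - (g 0).re) := by ring

/-- Harnack-type distortion bound via the Schwarz lemma. -/
lemma halfplane_distortion {g : ℂ → ℂ} {C : ℝ}
    (hg : DifferentiableOn ℂ g (ball 0 1))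
    (hb : ∀ z ∈ ball (0:ℂ) 1, (g z).re < C) :
    ∀ z ∈ ball (0:ℂ) (1/5), C - (g z).re ≤ 3/2 * (C - (g 0).re) := by
  have h0 : (0:ℂ) ∈ ball (0:ℂ) 1 := mem_ball_self one_pos
  set den : ℂ → ℂ := fun z => g z + (starRingEnd ℂ) (g 0) - 2 * C with hden
  have hdenre : ∀ z ∈ ball (0:ℂ) 1, (den z).re = (g z).re + (g 0).re - 2 * C := by
    intro z hz; simp [hden]
  have hdenne : ∀ z ∈ ball (0:ℂ) 1, den z ≠ 0 := by
    intro z hz hzero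
    have := hdenre z hz
    rw [hzero] at this
    simp at this
    have := hb z hz; have := hb 0 h0
    linarith
  set w : ℂ → ℂ := fun z => (g z - g 0) / den z with hw
  have hwd : DifferentiableOn ℂ w (ball 0 1) := by
    apply DifferentiableOn.div
    · exact hg.sub_const _
    · exact (hg.add_const _).sub_const _
    · exact hdenne
  have hw0 : w 0 = 0 := by simp [hw]
  have hkey : ∀ z ∈ ball (0:ℂ) 1, ‖g z - g 0‖ < ‖den z‖ := by
    intro z hz
    have h1 : Complex.normSq (g z - g 0) < Complex.normSq (den z) := by
      have e1 : (g z - g 0).re = (g z).re - (g 0).re := by simp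
      have e2 : (g z - g 0).im = (g z).im - (g 0).im := by simp
      have e3 : (den z).re = (g z).re + (g 0).re - 2 * C := hdenre z hz
      have e4 : (den z).im = (g z).im - (g 0).im := by simp [hden]; ring
      rw [Complex.normSq_apply, Complex.normSq_apply, e1, e2, e3, e4]
      have := hb z hz; have := hb 0 h0
      nlinarith [sq_nonneg ((g z).im - (g 0).im)]
    have := Real.sqrt_lt_sqrt (Complex.normSq_nonneg _) h1
    rw [Complex.norm_def, Complex.norm_def]; exact this
  have hmaps : MapsTo w (ball 0 1) (ball (0:ℂ) 1) := by
    intro z hz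
    rw [mem_ball, dist_zero_right, hw]
    simp only [norm_div]
    rw [div_lt_one (by simpa using (norm_pos_iff.mpr (hdenne z hz)))]
    exact hkey z hz
  intro z hz
  have hz1 : z ∈ ball (0:ℂ) 1 := by
    have : ‖z‖ < 1/5 := by simpa [mem_ball, Complex.dist_eq] using hz
    simp [mem_ball, Complex.dist_eq]; linarith
  have hsch : ‖w z‖ ≤ ‖z‖ :=
    Complex.norm_le_norm_of_mapsTo_ball hwd (hmaps.mono_right ball_subset_closedBall) hw0
      (by simpa [mem_ball, Complex.dist_eq] using hz1)
  have hρ : ‖w z‖ < 1/5 := by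
    have : ‖z‖ < 1/5 := by simpa [mem_ball, Complex.dist_eq] using hz
    linarith
  set num := g z - g 0 with hnum
  have hwdef : num = w z * den z := by
    rw [hw]; rw [div_mul_cancel₀ _ (hdenne z hz1)]
  have hA0 : 0 < C - (g 0).re := by linarith [hb 0 h0]
  have hdeq : den z = num - 2 * ((C - (g 0).re : ℝ) : ℂ) := by
    have hc : (starRingEnd ℂ) (g 0) = 2 * ((g 0).re : ℂ) - g 0 := by
      have h := Complex.add_conj (g 0)
      push_cast at h
      linear_combination h
    rw [hden, hnum, hc]
    push_cast
    ring
  have hden_le : ‖den z‖ ≤ ‖num‖ + 2 * (C - (g 0).re) := by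
    rw [hdeq]
    calc ‖num - 2 * ((C - (g 0).re : ℝ) : ℂ)‖
        ≤ ‖num‖ + ‖2 * ((C - (g 0).re : ℝ) : ℂ)‖ := by
          exact (norm_sub_le _ _)
    _ = ‖num‖ + 2 * (C - (g 0).re) := by
          rw [norm_mul, Complex.norm_real, Real.norm_eq_abs, abs_of_pos hA0]
          norm_num
  have hnum_eq : ‖num‖ = ‖w z‖ * ‖den z‖ := by
    rw [hwdef, norm_mul]
  have hnum_le : ‖num‖ ≤ 1/2 * (C - (g 0).re) := by
    have h1 : ‖num‖ ≤ ‖w z‖ * (‖num‖ + 2 * (C - (g 0).re)) := by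
      calc ‖num‖ = ‖w z‖ * ‖den z‖ := hnum_eq
      _ ≤ ‖w z‖ * (‖num‖ + 2 * (C - (g 0).re)) :=
          mul_le_mul_of_nonneg_left hden_le (norm_nonneg _)
    nlinarith [norm_nonneg num, norm_nonneg (w z)]
  have : (g z).re ≥ (g 0).re - ‖num‖ := by
    have h2 : num.re = (g z).re - (g 0).re := by rw [hnum]; simp
    have h3 := Complex.abs_re_le_norm num
    rw [h2] at h3
    cases abs_le.mp h3 with
    | intro hl hr => linarith
  linarith

lemma setA_eq (α s t : ℝ) (hα : 0 < α) :
    setA α s t = {x : ℝ × ℝ | (if 0 ≤ x.1 then t * x.1 ^ α else s * (-x.1) ^ α) < x.2} := by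
  ext ⟨x₁, x₂⟩
  simp only [setA, Set.mem_setOf_eq]
  rcases lt_trichotomy x₁ 0 with h | h | h
  · rw [if_neg (not_le.mpr h)]
    constructor
    · rintro ⟨-, -, h3⟩; exact h3 h
    · intro hlt
      exact ⟨fun h' => absurd h' (not_lt.mpr h.le), fun h' => absurd h' h.ne, fun _ => hlt⟩
  · subst h
    rw [if_pos le_rfl, Real.zero_rpow hα.ne', mul_zero]
    constructor
    · rintro ⟨-, h2, -⟩; exact h2 rfl
    · intro hlt
      exact ⟨fun h' => absurd h' (lt_irrefl _), fun _ => hlt, fun h' => absurd h' (lt_irrefl _)⟩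
  · rw [if_pos h.le]
    constructor
    · rintro ⟨h1, -, -⟩; exact h1 h
    · intro hlt
      exact ⟨fun _ => hlt, fun h' => absurd h' h.ne', fun h' => absurd h' (not_lt.mpr h.le)⟩

lemma setA_isOpen (α s t : ℝ) (hα : 0 < α) : IsOpen (setA α s t) := by
  rw [setA_eq α s t hα]
  have hc : Continuous fun x : ℝ => if 0 ≤ x then t * x ^ α else s * (-x) ^ α := by
    apply Continuous.if_le
    · exact continuous_const.mul (continuous_iff_continuousAt.mpr fun x =>
        Real.continuousAt_rpow_const x α (Or.inr hα.le))
    · exact continuous_const.mul ((continuous_iff_continuousAt.mpr fun x =>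
        Real.continuousAt_rpow_const x α (Or.inr hα.le)).comp continuous_neg)
    · exact continuous_const
    · exact continuous_id
    · intro x hx
      rw [← hx, Real.zero_rpow hα.ne', neg_zero, Real.zero_rpow hα.ne', mul_zero, mul_zero]
  exact isOpen_lt (hc.comp continuous_fst) continuous_snd

/-- Lower bound for the second coordinate on `setA`, given a lower bound on the first. -/
lemma setA_snd_lb {α s t : ℝ} (hα : 0 < α) (hs : s < 0) (ht : 0 < t)
    {x : ℝ × ℝ} (hx : x ∈ setA α s t) {K : ℝ} (hK0 : 0 ≤ K) (hK : -K ≤ x.1) :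
    s * K ^ α < x.2 := by
  obtain ⟨h1, h2, h3⟩ := hx
  have hKα : 0 ≤ K ^ α := Real.rpow_nonneg hK0 α
  rcases lt_trichotomy x.1 0 with h | h | h
  · have hxle : -x.1 ≤ K := by linarith
    have hmono : (-x.1) ^ α ≤ K ^ α :=
      Real.rpow_le_rpow (by linarith) hxle hα.le
    have := h3 h
    nlinarith
  · have := h2 h
    nlinarith
  · have := h1 h
    have : 0 ≤ t * x.1 ^ α := by positivity
    nlinarith [h1 ‹0 < x.1›]

/-- Componentwise bound on the operator norm of the derivative. -/
lemma norm_fderiv_le_max {f : ℂ → ℂ × ℂ} (hf : DifferentiableAt ℂ f 0) {M₁ M₂ : ℝ}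
    (h1 : ‖deriv (fun z => (f z).1) 0‖ ≤ M₁) (h2 : ‖deriv (fun z => (f z).2) 0‖ ≤ M₂)
    (hM1 : 0 ≤ M₁) : ‖fderiv ℂ f 0‖ ≤ max M₁ M₂ := by
  set L := fderiv ℂ f 0 with hL
  have hfd : HasFDerivAt f L 0 := hf.hasFDerivAt
  have hL1 : HasFDerivAt (fun z => (f z).1) ((ContinuousLinearMap.fst ℂ ℂ ℂ).comp L) 0 :=
    (ContinuousLinearMap.fst ℂ ℂ ℂ).hasFDerivAt.comp 0 hfd
  have hL2 : HasFDerivAt (fun z => (f z).2) ((ContinuousLinearMap.snd ℂ ℂ ℂ).comp L) 0 :=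
    (ContinuousLinearMap.snd ℂ ℂ ℂ).hasFDerivAt.comp 0 hfd
  have e1 : deriv (fun z => (f z).1) 0 = (L 1).1 := hL1.hasDerivAt.deriv
  have e2 : deriv (fun z => (f z).2) 0 = (L 1).2 := hL2.hasDerivAt.deriv
  apply ContinuousLinearMap.opNorm_le_bound _ (le_trans hM1 (le_max_left _ _))
  intro v
  have hv : L v = v • L 1 := by
    rw [← map_smul]
    congr 1
    simp [smul_eq_mul]
  rw [hv, norm_smul]
  have : ‖L 1‖ ≤ max M₁ M₂ := by
    rw [Prod.norm_def]
    apply max_le_max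
    · rw [← e1]; exact h1
    · rw [← e2]; exact h2
  calc ‖v‖ * ‖L 1‖ ≤ ‖v‖ * max M₁ M₂ := mul_le_mul_of_nonneg_left this (norm_nonneg v)
  _ = max M₁ M₂ * ‖v‖ := mul_comm _ _
set_option maxHeartbeats 2000000 in
/-- The tube domains over the two halves `A_{α,s,t} ∩ {x₁ < c}` and
`A_{α,s,t} ∩ {x₁ > c}` are Kobayashi-hyperbolic. -/
theorem tubeA_halves_hyperbolic (α s t : ℝ) (hα : 0 < α) (hα1 : α ≠ 1)
    (hs : s < 0) (ht : 0 < t) (c : ℝ) :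
    IsHyperbolic (tube (setA α s t ∩ {x : ℝ × ℝ | x.1 < c})) ∧
    IsHyperbolic (tube (setA α s t ∩ {x : ℝ × ℝ | c < x.1})) := by
  have hcont : Continuous fun z : ℂ × ℂ => (z.1.re, z.2.re) :=
    (Complex.continuous_re.comp continuous_fst).prodMk
      (Complex.continuous_re.comp continuous_snd)
  have habs_re : ∀ (u v : ℂ × ℂ), |u.1.re - v.1.re| ≤ dist u v ∧ |u.2.re - v.2.re| ≤ dist u v := by
    intro u v
    constructor
    · calc |u.1.re - v.1.re| ≤ ‖u.1 - v.1‖ := by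
            simpa using Complex.abs_re_le_norm (u.1 - v.1)
      _ = dist u.1 v.1 := (Complex.dist_eq _ _).symm
      _ ≤ dist u v := by rw [Prod.dist_eq]; exact le_max_left _ _
    · calc |u.2.re - v.2.re| ≤ ‖u.2 - v.2‖ := by
            simpa using Complex.abs_re_le_norm (u.2 - v.2)
      _ = dist u.2 v.2 := (Complex.dist_eq _ _).symm
      _ ≤ dist u v := by rw [Prod.dist_eq]; exact le_max_right _ _
  constructor
  · -- the half `x₁ < c`
    intro w hw
    obtain ⟨hwA, hwc⟩ := hw
    have hwc' : w.1.re < c := hwc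
    set d0 : ℝ := c - w.1.re with hd0def
    have hd0 : 0 < d0 := by simp only [hd0def]; linarith
    have hT : IsOpen (tube (setA α s t ∩ {x : ℝ × ℝ | x.1 < c})) := by
      exact IsOpen.preimage hcont
        ((setA_isOpen α s t hα).inter (isOpen_lt continuous_fst continuous_const))
    refine ⟨tube (setA α s t ∩ {x : ℝ × ℝ | x.1 < c}) ∩ ball w (d0 / 2), inter_subset_left,
      (hT.inter isOpen_ball).mem_nhds ⟨⟨hwA, hwc⟩, mem_ball_self (by positivity)⟩, ?_⟩
    set K : ℝ := |c| + 9 / 4 * d0 with hKdef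
    have hK0 : 0 ≤ K := by
      have := abs_nonneg c; simp only [hKdef]; linarith
    have hKα : 0 ≤ K ^ α := Real.rpow_nonneg hK0 α
    set B : ℝ := -s * K ^ α + 1 with hBdef
    have hB : 0 < B := by simp only [hBdef]; nlinarith
    set M₁ : ℝ := 2 * Real.exp (3 / 2 * d0) with hM₁def
    set M₂ : ℝ := 10 * Real.exp (B + w.2.re + d0 / 2) with hM₂def
    have hM₁ : 0 < M₁ := by simp only [hM₁def]; positivity
    have hM₂ : 0 < M₂ := by simp only [hM₂def]; positivity
    refine ⟨max M₁ M₂ + 1, by nlinarith [le_max_left M₁ M₂], ?_⟩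
    intro f hdiff hmaps hf0
    obtain ⟨hf0T, hf0ball⟩ := hf0
    have hdw : dist (f 0) w < d0 / 2 := mem_ball.mp hf0ball
    have hre1 : |(f 0).1.re - w.1.re| < d0 / 2 := lt_of_le_of_lt (habs_re (f 0) w).1 hdw
    have hre2 : |(f 0).2.re - w.2.re| < d0 / 2 := lt_of_le_of_lt (habs_re (f 0) w).2 hdw
    obtain ⟨hre1l, hre1r⟩ := abs_lt.mp hre1
    obtain ⟨hre2l, hre2r⟩ := abs_lt.mp hre2
    have hd1 : DifferentiableOn ℂ (fun z => (f z).1) (ball 0 1) := hdiff.fst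
    have hb1 : ∀ z ∈ ball (0:ℂ) 1, ((f z).1).re < c := fun z hz => (hmaps hz).2
    have hder1 : ‖deriv (fun z => (f z).1) 0‖ ≤ M₁ := by
      have h := halfplane_deriv_bound one_pos hd1 hb1
      have hexp : Real.exp (c - ((f 0).1).re) ≤ Real.exp (3 / 2 * d0) := by
        apply Real.exp_le_exp.2
        simp only [hd0def] at *
        linarith
      calc ‖deriv (fun z => (f z).1) 0‖ ≤ 2 / 1 * Real.exp (c - ((f 0).1).re) := h
      _ ≤ 2 * Real.exp (3 / 2 * d0) := by rw [div_one]; nlinarith [Real.exp_pos (c - ((f 0).1).re)]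
    have hdist15 := halfplane_distortion hd1 hb1
    have hb2 : ∀ z ∈ ball (0:ℂ) (1/5), (-(f z).2).re < B := by
      intro z hz
      have hz1 : z ∈ ball (0:ℂ) 1 := ball_subset_ball (by norm_num) hz
      have h1 := hdist15 z hz
      have h2 : c - ((f 0).1).re < 3 / 2 * d0 := by simp only [hd0def] at *; linarith
      have hlow : -K ≤ ((f z).1).re := by
        have hnc := neg_abs_le c
        simp only [hKdef]
        linarith
      have hmem : (((f z).1).re, ((f z).2).re) ∈ setA α s t := (hmaps hz1).1
      have hlb := setA_snd_lb hα hs ht hmem hK0 hlow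
      simp only [Complex.neg_re, hBdef]
      linarith
    have hd2 : DifferentiableOn ℂ (fun z => -(f z).2) (ball 0 (1/5)) :=
      (hdiff.snd.neg).mono (ball_subset_ball (by norm_num))
    have hder2 : ‖deriv (fun z => (f z).2) 0‖ ≤ M₂ := by
      have h := halfplane_deriv_bound (by norm_num : (0:ℝ) < 1/5) hd2 hb2
      have hneg : deriv (fun z => -(f z).2) 0 = -deriv (fun z => (f z).2) 0 := deriv.neg
      rw [hneg, norm_neg] at h
      have hexp : Real.exp (B - ((-(f 0).2)).re) ≤ Real.exp (B + w.2.re + d0 / 2) := by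
        apply Real.exp_le_exp.2
        simp only [Complex.neg_re]
        linarith
      calc ‖deriv (fun z => (f z).2) 0‖ ≤ 2 / (1/5) * Real.exp (B - ((-(f 0).2)).re) := h
      _ ≤ 10 * Real.exp (B + w.2.re + d0 / 2) := by
            nlinarith [Real.exp_pos (B - ((-(f 0).2)).re)]
    have hDA : DifferentiableAt ℂ f 0 := hdiff.differentiableAt (ball_mem_nhds _ one_pos)
    have hfinal := norm_fderiv_le_max hDA hder1 hder2 hM₁.le
    have := le_max_left M₁ M₂
    nlinarith [le_max_left M₁ M₂]
  · -- the half `c < x₁`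
    intro w hw
    obtain ⟨hwA, hwc⟩ := hw
    have hwc' : c < w.1.re := hwc
    have hT : IsOpen (tube (setA α s t ∩ {x : ℝ × ℝ | c < x.1})) := by
      exact IsOpen.preimage hcont
        ((setA_isOpen α s t hα).inter (isOpen_lt continuous_const continuous_fst))
    refine ⟨tube (setA α s t ∩ {x : ℝ × ℝ | c < x.1}) ∩ ball w 1, inter_subset_left,
      (hT.inter isOpen_ball).mem_nhds ⟨⟨hwA, hwc⟩, mem_ball_self one_pos⟩, ?_⟩
    have hc0 : 0 ≤ |c| := abs_nonneg c
    have hcα : 0 ≤ |c| ^ α := Real.rpow_nonneg hc0 α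
    set B : ℝ := -s * |c| ^ α + 1 with hBdef
    have hB : 0 < B := by simp only [hBdef]; nlinarith
    set M₁ : ℝ := 2 * Real.exp (w.1.re + 1 - c) with hM₁def
    set M₂ : ℝ := 2 * Real.exp (B + w.2.re + 1) with hM₂def
    have hM₁ : 0 < M₁ := by simp only [hM₁def]; positivity
    have hM₂ : 0 < M₂ := by simp only [hM₂def]; positivity
    refine ⟨max M₁ M₂ + 1, by nlinarith [le_max_left M₁ M₂], ?_⟩
    intro f hdiff hmaps hf0
    obtain ⟨hf0T, hf0ball⟩ := hf0
    have hdw : dist (f 0) w < 1 := mem_ball.mp hf0ball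
    have hre1 : |(f 0).1.re - w.1.re| < 1 := lt_of_le_of_lt (habs_re (f 0) w).1 hdw
    have hre2 : |(f 0).2.re - w.2.re| < 1 := lt_of_le_of_lt (habs_re (f 0) w).2 hdw
    obtain ⟨hre1l, hre1r⟩ := abs_lt.mp hre1
    obtain ⟨hre2l, hre2r⟩ := abs_lt.mp hre2
    have hd1 : DifferentiableOn ℂ (fun z => -(f z).1) (ball 0 1) := hdiff.fst.neg
    have hb1 : ∀ z ∈ ball (0:ℂ) 1, ((-(f z).1)).re < -c := by
      intro z hz
      have : c < ((f z).1).re := (hmaps hz).2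
      simp only [Complex.neg_re]
      linarith
    have hder1 : ‖deriv (fun z => (f z).1) 0‖ ≤ M₁ := by
      have h := halfplane_deriv_bound one_pos hd1 hb1
      have hneg : deriv (fun z => -(f z).1) 0 = -deriv (fun z => (f z).1) 0 := deriv.neg
      rw [hneg, norm_neg] at h
      have hexp : Real.exp (-c - ((-(f 0).1)).re) ≤ Real.exp (w.1.re + 1 - c) := by
        apply Real.exp_le_exp.2
        simp only [Complex.neg_re]
        linarith
      calc ‖deriv (fun z => (f z).1) 0‖ ≤ 2 / 1 * Real.exp (-c - ((-(f 0).1)).re) := h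
      _ ≤ M₁ := by
            rw [div_one, hM₁def]
            nlinarith [Real.exp_pos (-c - ((-(f 0).1)).re)]
    have hd2 : DifferentiableOn ℂ (fun z => -(f z).2) (ball 0 1) := hdiff.snd.neg
    have hb2 : ∀ z ∈ ball (0:ℂ) 1, ((-(f z).2)).re < B := by
      intro z hz
      have hgt : c < ((f z).1).re := (hmaps hz).2
      have hlow : -|c| ≤ ((f z).1).re := le_trans (neg_abs_le c) hgt.le
      have hmem : (((f z).1).re, ((f z).2).re) ∈ setA α s t := (hmaps hz).1
      have hlb := setA_snd_lb hα hs ht hmem hc0 hlow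
      simp only [Complex.neg_re, hBdef]
      linarith
    have hder2 : ‖deriv (fun z => (f z).2) 0‖ ≤ M₂ := by
      have h := halfplane_deriv_bound one_pos hd2 hb2
      have hneg : deriv (fun z => -(f z).2) 0 = -deriv (fun z => (f z).2) 0 := deriv.neg
      rw [hneg, norm_neg] at h
      have hexp : Real.exp (B - ((-(f 0).2)).re) ≤ Real.exp (B + w.2.re + 1) := by
        apply Real.exp_le_exp.2
        simp only [Complex.neg_re]
        linarith
      calc ‖deriv (fun z => (f z).2) 0‖ ≤ 2 / 1 * Real.exp (B - ((-(f 0).2)).re) := h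
      _ ≤ M₂ := by
            rw [div_one, hM₂def]
            nlinarith [Real.exp_pos (B - ((-(f 0).2)).re)]
    have hDA : DifferentiableAt ℂ f 0 := hdiff.differentiableAt (ball_mem_nhds _ one_pos)
    have hfinal := norm_fderiv_le_max hDA hder1 hder2 hM₁.le
    nlinarith [le_max_left M₁ M₂]
end

section
/- Let s>0, t>0, and let c ∈ ℝ. Set D₋ = B_{s,t} ∩ {x₁ < c} and D₊ = B_{s,t} ∩ {x₁ > c}. Then each of the tube domains T_{D₋} and T_{D₊} (when the base is nonempty) satisfies: for every point w there exist a neighborhood U of w and a constant M>0 such that every holomorphic map f: Δ → T_{D₋} (respectively T_{D₊}) with f(0) ∈ U satisfies ‖f'(0)‖ < M; i.e., T_{D₋} and T_{D₊} are Kobayashi-hyperbolic. -/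
open Complex Metric Set Filter Topology

set_option maxHeartbeats 1000000

/-- The base domain `B_{s,t}`. -/
def setB (s t : ℝ) : Set (ℝ × ℝ) :=
  {x | (0 < x.1 → x.1 * Real.log (t * x.1) < x.2) ∧ (x.1 = 0 → 0 < x.2) ∧
       (x.1 < 0 → x.1 * Real.log (s * (-x.1)) < x.2)}

/-! ### Auxiliary lemmas on maps into a half-plane -/

private lemma mobius_ne {b w : ℂ} (hb : 0 < b.re) (hw : 0 < w.re) :
    w + (starRingEnd ℂ) b ≠ 0 := by
  intro h
  have h1 : (w + (starRingEnd ℂ) b).re = 0 := by rw [h]; simp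
  rw [Complex.add_re, Complex.conj_re] at h1
  linarith

private lemma mobius_norm_lt {b w : ℂ} (hb : 0 < b.re) (hw : 0 < w.re) :
    ‖w - b‖ < ‖w + (starRingEnd ℂ) b‖ := by
  have h1 : Complex.normSq (w - b) < Complex.normSq (w + (starRingEnd ℂ) b) := by
    simp only [Complex.normSq_apply, Complex.add_re, Complex.add_im, Complex.sub_re,
      Complex.sub_im, Complex.conj_re, Complex.conj_im]
    nlinarith
  have h2 : ‖w - b‖ ^ 2 < ‖w + (starRingEnd ℂ) b‖ ^ 2 := by
    rwa [← Complex.sq_norm, ← Complex.sq_norm] at h1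
  exact lt_of_pow_lt_pow_left₀ 2 (norm_nonneg _) h2

private lemma mobius_aux {g : ℂ → ℂ} {r : ℝ}
    (hg : DifferentiableOn ℂ g (ball 0 r))
    (hre : ∀ z ∈ ball (0 : ℂ) r, 0 < (g z).re) (h0 : (0:ℂ) ∈ ball (0:ℂ) r) :
    DifferentiableOn ℂ (fun z => (g z - g 0) / (g z + (starRingEnd ℂ) (g 0))) (ball 0 r) ∧
    MapsTo (fun z => (g z - g 0) / (g z + (starRingEnd ℂ) (g 0))) (ball 0 r) (ball 0 1) := by
  have hb : 0 < (g 0).re := hre 0 h0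
  have hne : ∀ z ∈ ball (0:ℂ) r, g z + (starRingEnd ℂ) (g 0) ≠ 0 := fun z hz =>
    mobius_ne hb (hre z hz)
  constructor
  · exact (hg.sub_const _).div (hg.add_const _) hne
  · intro z hz
    rw [mem_ball_zero_iff, norm_div]
    have hlt := mobius_norm_lt hb (hre z hz)
    have hpos : 0 < ‖g z + (starRingEnd ℂ) (g 0)‖ := (norm_nonneg _).trans_lt hlt
    exact (div_lt_one hpos).2 hlt

/-- Schwarz–Pick type bound: a map on `ball 0 r` with positive real part has
`‖deriv g 0‖ ≤ 2 (g 0).re / r`. -/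
private lemma halfplane_deriv {g : ℂ → ℂ} {r : ℝ} (hr : 0 < r)
    (hg : DifferentiableOn ℂ g (ball 0 r))
    (hre : ∀ z ∈ ball (0 : ℂ) r, 0 < (g z).re) :
    ‖deriv g 0‖ ≤ 2 * (g 0).re / r := by
  have h0 : (0:ℂ) ∈ ball (0:ℂ) r := mem_ball_self hr
  have hb : 0 < (g 0).re := hre 0 h0
  obtain ⟨hdiff, hmaps⟩ := mobius_aux hg hre h0
  set h : ℂ → ℂ := fun z => (g z - g 0) / (g z + (starRingEnd ℂ) (g 0)) with hh
  have hh0 : h 0 = 0 := by simp [hh]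
  have hmaps' : MapsTo h (ball 0 r) (ball (h 0) 1) := by rwa [hh0]
  have hS : ‖deriv h 0‖ ≤ 1 / r := Complex.norm_deriv_le_div_of_mapsTo_ball hdiff (hmaps'.mono_right ball_subset_closedBall) hr
  -- compute deriv h 0
  have hga : DifferentiableAt ℂ g 0 := hg.differentiableAt (ball_mem_nhds 0 hr)
  have hgd : HasDerivAt g (deriv g 0) 0 := hga.hasDerivAt
  have hden0 : g 0 + (starRingEnd ℂ) (g 0) ≠ 0 := mobius_ne hb hb
  have hdivd : HasDerivAt h
      ((deriv g 0 * (g 0 + (starRingEnd ℂ) (g 0)) - (g 0 - g 0) * deriv g 0)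
        / (g 0 + (starRingEnd ℂ) (g 0)) ^ 2) 0 :=
    (hgd.sub_const _).div (hgd.add_const _) hden0
  have hval : deriv h 0 = deriv g 0 / (g 0 + (starRingEnd ℂ) (g 0)) := by
    rw [hdivd.deriv]
    field_simp
    ring
  rw [hval] at hS
  rw [Complex.add_conj] at hS
  rw [norm_div] at hS
  have hnorm : ‖((2 * (g 0).re : ℝ) : ℂ)‖ = 2 * (g 0).re := by
    rw [Complex.norm_real, Real.norm_eq_abs, abs_of_pos (by linarith)]
  rw [hnorm] at hS
  rw [div_le_div_iff₀ (by linarith) hr] at hS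
  rw [le_div_iff₀ hr]
  linarith

/-- Harnack-type growth bound: a map on the unit disk with positive real part satisfies
`‖g z‖ ≤ 3 ‖g 0‖` on the disk of radius `1/2`. -/
private lemma halfplane_growth {g : ℂ → ℂ}
    (hg : DifferentiableOn ℂ g (ball 0 1))
    (hre : ∀ z ∈ ball (0 : ℂ) 1, 0 < (g z).re)
    {z : ℂ} (hz : z ∈ ball (0 : ℂ) (1/2)) : ‖g z‖ ≤ 3 * ‖g 0‖ := by
  have h0 : (0:ℂ) ∈ ball (0:ℂ) 1 := mem_ball_self one_pos
  have hz1 : z ∈ ball (0:ℂ) 1 := ball_subset_ball (by norm_num) hz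
  have hb : 0 < (g 0).re := hre 0 h0
  obtain ⟨hdiff, hmaps⟩ := mobius_aux hg hre h0
  set h : ℂ → ℂ := fun z => (g z - g 0) / (g z + (starRingEnd ℂ) (g 0)) with hh
  have hh0 : h 0 = 0 := by simp [hh]
  have hmaps' : MapsTo h (ball 0 1) (ball (h 0) 1) := by rwa [hh0]
  have hS := Complex.dist_le_div_mul_dist_of_mapsTo_ball hdiff (hmaps'.mono_right ball_subset_closedBall) hz1
  rw [hh0, dist_zero_right, dist_zero_right, div_self (one_ne_zero), one_mul] at hS
  -- ‖h z‖ ≤ ‖z‖ < 1/2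
  have hzn : ‖z‖ < 1/2 := mem_ball_zero_iff.1 hz
  have hhalf : ‖h z‖ < 1/2 := lt_of_le_of_lt hS hzn
  have hne : g z + (starRingEnd ℂ) (g 0) ≠ 0 := mobius_ne hb (hre z hz1)
  have hfact : g z - g 0 = h z * (g z + (starRingEnd ℂ) (g 0)) := by
    rw [hh]; field_simp
  have h1 : ‖g z - g 0‖ ≤ ‖h z‖ * (‖g z‖ + ‖g 0‖) := by
    rw [hfact, norm_mul]
    have : ‖g z + (starRingEnd ℂ) (g 0)‖ ≤ ‖g z‖ + ‖g 0‖ := by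
      calc ‖g z + (starRingEnd ℂ) (g 0)‖ ≤ ‖g z‖ + ‖(starRingEnd ℂ) (g 0)‖ := norm_add_le _ _
      _ = ‖g z‖ + ‖g 0‖ := by rw [RCLike.norm_conj]
    exact mul_le_mul_of_nonneg_left this (norm_nonneg _)
  have h2 : ‖g z‖ - ‖g 0‖ ≤ ‖g z - g 0‖ := by
    have := norm_sub_norm_le (g z) (g 0)
    linarith
  nlinarith [norm_nonneg (g z), norm_nonneg (g 0), norm_nonneg (h z)]

/-! ### The core hyperbolicity criterion -/

private lemma core {D : Set (ℝ × ℝ)} (hD : IsOpen D) {ε c : ℝ} (hε : ε = 1 ∨ ε = -1)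
    (hc : ∀ x ∈ D, ε * x.1 < c)
    (hfib : ∀ a : ℝ, ∃ m : ℝ, ∀ x ∈ D, a < ε * x.1 → m < x.2) :
    IsHyperbolic (tube D) := by
  have hεn : ‖(ε : ℂ)‖ = 1 := by
    rcases hε with h | h <;> simp [h]
  intro w hw
  have hTopen : IsOpen (tube D) :=
    hD.preimage ((Complex.continuous_re.comp continuous_fst).prodMk
      (Complex.continuous_re.comp continuous_snd))
  obtain ⟨δ₀, hδ₀, hball⟩ := Metric.isOpen_iff.1 hTopen w hw
  set δ : ℝ := min δ₀ 1 with hδdef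
  have hδ : 0 < δ := lt_min hδ₀ one_pos
  set K : ℝ := |c| + ‖w‖ + 2 with hK
  have hKpos : 0 < K := by positivity
  obtain ⟨m, hm⟩ := hfib (c - 3 * K)
  set M : ℝ := max (2 * K) (4 * (‖w‖ + 1 + |m|)) + 1 with hM
  have hMpos : 0 < M := by
    have h1 : (0:ℝ) ≤ max (2 * K) (4 * (‖w‖ + 1 + |m|)) :=
      le_max_of_le_left (by positivity)
    linarith
  refine ⟨ball w δ, (ball_subset_ball (min_le_left _ _)).trans hball,
    ball_mem_nhds w hδ, M, hMpos, ?_⟩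
  intro f hf hmapsT hfU
  set f₁ : ℂ → ℂ := fun z => (f z).1 with hf₁def
  set f₂ : ℂ → ℂ := fun z => (f z).2 with hf₂def
  have hf₁ : DifferentiableOn ℂ f₁ (ball 0 1) := hf.fst
  have hf₂ : DifferentiableOn ℂ f₂ (ball 0 1) := hf.snd
  have hfw : ‖f 0‖ < ‖w‖ + 1 := by
    have h1 : dist (f 0) w < δ := mem_ball.1 hfU
    have h2 : ‖f 0‖ ≤ ‖f 0 - w‖ + ‖w‖ := by
      have h2' := norm_add_le (f 0 - w) w
      have h2'' : f 0 - w + w = f 0 := by ring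
      rwa [h2''] at h2'
    rw [dist_eq_norm] at h1
    have h3 : δ ≤ 1 := min_le_right _ _
    linarith
  -- the half-plane map in the first coordinate
  set u : ℂ → ℂ := fun z => (c : ℂ) - (ε : ℂ) * f₁ z with hu
  have hudiff : DifferentiableOn ℂ u (ball 0 1) := (hf₁.const_mul _).const_sub _
  have hure : ∀ z ∈ ball (0:ℂ) 1, (u z).re = c - ε * (f₁ z).re := by
    intro z hz
    simp [hu, Complex.sub_re, Complex.ofReal_re, Complex.re_ofReal_mul]
  have hmem : ∀ z ∈ ball (0:ℂ) 1, ((f z).1.re, (f z).2.re) ∈ D := fun z hz => hmapsT hz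
  have hupos : ∀ z ∈ ball (0:ℂ) 1, 0 < (u z).re := by
    intro z hz
    rw [hure z hz]
    have := hc _ (hmem z hz)
    simpa [hf₁def] using sub_pos.2 this
  have hu0 : ‖u 0‖ < K := by
    have h1 : ‖u 0‖ ≤ ‖(c:ℂ)‖ + ‖(ε:ℂ) * f₁ 0‖ := norm_sub_le _ _
    have h2 : ‖(ε:ℂ) * f₁ 0‖ = ‖f₁ 0‖ := by rw [norm_mul, hεn, one_mul]
    have h3 : ‖f₁ 0‖ ≤ ‖f 0‖ := norm_fst_le (f 0)
    have h4 : ‖(c:ℂ)‖ = |c| := by rw [Complex.norm_real, Real.norm_eq_abs]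
    rw [h2, h4] at h1
    simp only [hK]
    linarith
  -- On the half-disk, ε * Re f₁ stays above c - 3K, hence Re f₂ stays above m
  have hf₂pos : ∀ z ∈ ball (0:ℂ) (1/2), m < (f₂ z).re := by
    intro z hz
    have hz1 : z ∈ ball (0:ℂ) 1 := ball_subset_ball (by norm_num) hz
    have hgrow : ‖u z‖ ≤ 3 * ‖u 0‖ := halfplane_growth hudiff hupos hz
    have hrele : (u z).re ≤ ‖u z‖ := Complex.re_le_norm (u z)
    have h5 : c - ε * (f₁ z).re < 3 * K := by
      rw [← hure z hz1]
      calc (u z).re ≤ ‖u z‖ := hrele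
        _ ≤ 3 * ‖u 0‖ := hgrow
        _ < 3 * K := by linarith
    have h6 : c - 3 * K < ε * (f z).1.re := by simp only [hf₁def] at h5; linarith
    exact hm _ (hmem z hz1) h6
  -- derivative bound for f₂
  set v : ℂ → ℂ := fun z => f₂ z - (m : ℂ) with hv
  have hvdiff : DifferentiableOn ℂ v (ball 0 (1/2)) :=
    (hf₂.mono (ball_subset_ball (by norm_num))).sub_const _
  have hvpos : ∀ z ∈ ball (0:ℂ) (1/2), 0 < (v z).re := by
    intro z hz
    have := hf₂pos z hz
    simp only [hv, Complex.sub_re, Complex.ofReal_re]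
    linarith
  have hvd : ‖deriv v 0‖ ≤ 2 * (v 0).re / (1/2) :=
    halfplane_deriv (by norm_num) hvdiff hvpos
  have hvderiv : deriv v 0 = deriv f₂ 0 := by
    simp only [hv]
    exact deriv_sub_const _
  have hv0re : (v 0).re = (f₂ 0).re - m := by simp [hv]
  have hd₂ : ‖deriv f₂ 0‖ ≤ 4 * (‖w‖ + 1 + |m|) := by
    rw [← hvderiv]
    have h7 : (v 0).re ≤ ‖w‖ + 1 + |m| := by
      rw [hv0re]
      have h8 : (f₂ 0).re ≤ ‖f₂ 0‖ := Complex.re_le_norm _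
      have h9 : ‖f₂ 0‖ ≤ ‖f 0‖ := norm_snd_le (f 0)
      have h10 : -m ≤ |m| := neg_le_abs m
      linarith
    calc ‖deriv v 0‖ ≤ 2 * (v 0).re / (1/2) := hvd
      _ = 4 * (v 0).re := by ring
      _ ≤ 4 * (‖w‖ + 1 + |m|) := by linarith
  -- derivative bound for f₁
  have hud : ‖deriv u 0‖ ≤ 2 * (u 0).re / 1 := halfplane_deriv one_pos hudiff hupos
  have hf₁a : DifferentiableAt ℂ f₁ 0 := hf₁.differentiableAt (ball_mem_nhds _ one_pos)
  have huderiv : HasDerivAt u (-((ε:ℂ) * deriv f₁ 0)) 0 :=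
    (hf₁a.hasDerivAt.const_mul ((ε:ℂ))).const_sub _
  have hd₁ : ‖deriv f₁ 0‖ < 2 * K := by
    have h11 : ‖deriv u 0‖ = ‖deriv f₁ 0‖ := by
      rw [huderiv.deriv, norm_neg, norm_mul, hεn, one_mul]
    have h12 : (u 0).re ≤ ‖u 0‖ := Complex.re_le_norm _
    rw [← h11]
    calc ‖deriv u 0‖ ≤ 2 * (u 0).re / 1 := hud
      _ = 2 * (u 0).re := by ring
      _ ≤ 2 * ‖u 0‖ := by linarith
      _ < 2 * K := by linarith
  -- assemble the full derivative
  have hfa : DifferentiableAt ℂ f 0 := hf.differentiableAt (ball_mem_nhds _ one_pos)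
  set L := fderiv ℂ f 0 with hL
  have hLf : HasFDerivAt f L 0 := hfa.hasFDerivAt
  have hder₁ : deriv f₁ 0 = (L 1).1 := (hLf.fst.hasDerivAt).deriv
  have hder₂ : deriv f₂ 0 = (L 1).2 := (hLf.snd.hasDerivAt).deriv
  have hLnorm : ‖L‖ ≤ ‖L 1‖ := by
    apply ContinuousLinearMap.opNorm_le_bound _ (norm_nonneg _)
    intro z
    have : L z = z • L 1 := by
      rw [← L.map_smul, smul_eq_mul, mul_one]
    rw [this, norm_smul, mul_comm]
  have hL1 : ‖L 1‖ = max ‖(L 1).1‖ ‖(L 1).2‖ := rfl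
  calc ‖L‖ ≤ ‖L 1‖ := hLnorm
    _ = max ‖(L 1).1‖ ‖(L 1).2‖ := hL1
    _ ≤ max (2 * K) (4 * (‖w‖ + 1 + |m|)) := by
        apply max_le_max
        · rw [← hder₁]; exact hd₁.le
        · rw [← hder₂]; exact hd₂
    _ < M := by rw [hM]; linarith

/-! ### Properties of the base domain -/

private lemma neg_inv_exp_le_mul_log {u : ℝ} (hu : 0 < u) :
    -(Real.exp 1)⁻¹ ≤ u * Real.log u := by
  rcases le_or_gt 1 u with h | h
  · have h1 : 0 ≤ Real.log u := Real.log_nonneg h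
    have h2 : 0 < (Real.exp 1)⁻¹ := by positivity
    nlinarith
  · set v := Real.log u with hv
    have hv0 : v < 0 := Real.log_neg hu h
    have hu' : u = Real.exp v := (Real.exp_log hu).symm
    have key : -v ≤ Real.exp (-(v + 1)) := by
      have := Real.add_one_le_exp (-(v + 1))
      linarith
    have h2 : Real.exp (v + 1) ≤ (-v)⁻¹ := by
      rw [show v + 1 = -(-(v + 1)) by ring, Real.exp_neg]
      exact inv_anti₀ (by linarith) key
    have h3 : v * (-v)⁻¹ ≤ v * Real.exp (v + 1) :=
      mul_le_mul_of_nonpos_left h2 (le_of_lt hv0)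
    have h4 : v * (-v)⁻¹ = -1 := by
      rw [← neg_inv, mul_neg, mul_inv_cancel₀ (ne_of_lt hv0)]
    have h5 : Real.exp (v + 1) = Real.exp 1 * Real.exp v := by
      rw [← Real.exp_add]; ring_nf
    rw [h4, h5] at h3
    have h6 : -1 ≤ v * Real.exp v * Real.exp 1 := by nlinarith [Real.exp_pos v, Real.exp_pos 1]
    have h7 : 0 < Real.exp 1 := Real.exp_pos 1
    rw [hu', mul_comm (Real.exp v) v]
    nlinarith [mul_inv_cancel₀ (ne_of_gt h7)]

/-- On any bounded band `|x₁| ≤ R`, the second coordinate of points of `setB` is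
bounded below. -/
private lemma setB_fiber {s t : ℝ} (hs : 0 < s) (ht : 0 < t) {x : ℝ × ℝ} (hx : x ∈ setB s t)
    {R : ℝ} (hR : |x.1| ≤ R) :
    -(1 / (Real.exp 1 * t)) - s * R ^ 2 - 1 < x.2 := by
  obtain ⟨h1, h2, h3⟩ := hx
  have hRabs := abs_le.1 hR
  have he : 0 < Real.exp 1 := Real.exp_pos 1
  have hsq : x.1 ^ 2 ≤ R ^ 2 := by nlinarith [abs_nonneg x.1, le_abs_self x.1, neg_abs_le x.1]
  have hpos1 : 0 < 1 / (Real.exp 1 * t) := by positivity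
  have hpos2 : 0 ≤ s * R ^ 2 := by nlinarith [sq_nonneg R]
  rcases lt_trichotomy x.1 0 with h | h | h
  · have hl := h3 h
    have hy : 0 < -x.1 := by linarith
    have hlog : Real.log (s * -x.1) ≤ s * -x.1 := by
      have := Real.log_le_sub_one_of_pos (show 0 < s * -x.1 by positivity)
      linarith
    have hml : x.1 * (s * -x.1) ≤ x.1 * Real.log (s * -x.1) :=
      mul_le_mul_of_nonpos_left hlog (le_of_lt h)
    nlinarith
  · have := h2 h
    linarith
  · have hl := h1 h
    have hu : 0 < t * x.1 := by positivity
    have hkey : -(Real.exp 1)⁻¹ ≤ (t * x.1) * Real.log (t * x.1) := neg_inv_exp_le_mul_log hu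
    have hineq : -(1 / (Real.exp 1 * t)) ≤ x.1 * Real.log (t * x.1) := by
      rw [neg_le]
      rw [le_div_iff₀ (by positivity : (0:ℝ) < Real.exp 1 * t)]
      nlinarith [mul_inv_cancel₀ (ne_of_gt he)]
    linarith

private lemma isOpen_setB {s t : ℝ} (hs : 0 < s) (ht : 0 < t) : IsOpen (setB s t) := by
  rw [isOpen_iff_mem_nhds]
  rintro ⟨x₁, x₂⟩ hx
  obtain ⟨h1, h2, h3⟩ := hx
  simp only at h1 h2 h3
  rcases lt_trichotomy x₁ 0 with h | h | h
  · -- negative case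
    set V : Set (ℝ × ℝ) := {y | y.1 < 0} ∩
      (fun y : ℝ × ℝ => y.2 - y.1 * Real.log (s * -y.1)) ⁻¹' (Ioi 0) with hV
    have hVopen : IsOpen V := by
      apply ContinuousOn.isOpen_inter_preimage ?_ (isOpen_lt continuous_fst continuous_const)
        isOpen_Ioi
      intro y hy
      apply ContinuousAt.continuousWithinAt
      have hyneg : y.1 < 0 := hy
      have hne : s * -y.1 ≠ 0 := ne_of_gt (by nlinarith)
      exact (continuous_snd.continuousAt).sub
        ((continuous_fst.continuousAt).mul
          (((continuous_const.mul continuous_fst.neg).continuousAt).log hne))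
    have hmemV : (x₁, x₂) ∈ V := by
      constructor
      · exact h
      · simp only [mem_preimage, mem_Ioi]
        have := h3 h
        linarith
    apply mem_of_superset (hVopen.mem_nhds hmemV)
    rintro ⟨y₁, y₂⟩ ⟨hy1, hy2⟩
    simp only [mem_setOf_eq, mem_preimage, mem_Ioi] at hy1 hy2
    exact ⟨fun hp => absurd hp (not_lt.2 hy1.le), fun hp => absurd hp (ne_of_lt hy1),
      fun _ => by linarith⟩
  · -- zero case
    set ρ : ℝ := min (min 1 (x₂ / (4 * t))) (s * x₂ ^ 2 / 17) with hρdef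
    have hx₂ : 0 < x₂ := h2 h
    have hρ : 0 < ρ := by
      apply lt_min (lt_min one_pos (by positivity)) (by positivity)
    set V : Set (ℝ × ℝ) := {y | |y.1| < ρ} ∩ {y | x₂ / 2 < y.2} with hV
    have hVopen : IsOpen V :=
      (isOpen_lt (_root_.continuous_abs.comp continuous_fst) continuous_const).inter
        (isOpen_lt continuous_const continuous_snd)
    have hmemV : (x₁, x₂) ∈ V := by
      constructor
      · simp only [mem_setOf_eq, h, abs_zero]; exact hρ
      · simp only [mem_setOf_eq]; linarith
    apply mem_of_superset (hVopen.mem_nhds hmemV)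
    rintro ⟨y₁, y₂⟩ ⟨hy1, hy2⟩
    simp only [mem_setOf_eq] at hy1 hy2
    have hy1' := abs_lt.1 hy1
    have hρ1 : ρ ≤ 1 := (min_le_left _ _).trans (min_le_left _ _)
    have hρ2 : ρ ≤ x₂ / (4 * t) := (min_le_left _ _).trans (min_le_right _ _)
    have hρ3 : ρ ≤ s * x₂ ^ 2 / 17 := min_le_right _ _
    refine ⟨?_, ?_, ?_⟩
    · -- positive side
      intro hp
      have hp' : 0 < y₁ := hp
      show y₁ * Real.log (t * y₁) < y₂
      have hlog : Real.log (t * y₁) ≤ t * y₁ := by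
        have := Real.log_le_sub_one_of_pos (show 0 < t * y₁ by positivity)
        linarith
      have hb : y₁ * Real.log (t * y₁) ≤ y₁ * (t * y₁) :=
        mul_le_mul_of_nonneg_left hlog (le_of_lt hp')
      rw [le_div_iff₀ (by positivity : (0:ℝ) < 4 * t)] at hρ2
      nlinarith [hb, hρ2, hy2, mul_pos ht hp',
        mul_nonneg (mul_nonneg ht.le (sub_nonneg.2 hy1'.2.le)) hp'.le,
        mul_nonneg (mul_nonneg ht.le hρ.le) (sub_nonneg.2 (hy1'.2.le.trans hρ1))]
    · intro hp
      simp only at hp ⊢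
      linarith
    · -- negative side
      intro hn
      have hn' : y₁ < 0 := hn
      show y₁ * Real.log (s * -y₁) < y₂
      set q : ℝ := Real.sqrt (s * -y₁) with hq
      have hsy : 0 < s * -y₁ := by nlinarith
      have hq0 : 0 < q := Real.sqrt_pos.2 hsy
      have hq2 : q ^ 2 = s * -y₁ := Real.sq_sqrt (le_of_lt hsy)
      have hlogq : 1 - q⁻¹ ≤ Real.log q := by
        have := Real.log_le_sub_one_of_pos (show 0 < q⁻¹ by positivity)
        rw [Real.log_inv] at this
        have hq1 : q⁻¹ ≤ q⁻¹ := le_refl _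
        linarith
      have hlogsy : Real.log (s * -y₁) = 2 * Real.log q := by
        rw [← hq2]
        rw [show q ^ 2 = q * q by ring, Real.log_mul (ne_of_gt hq0) (ne_of_gt hq0)]
        ring
      -- y₁ * log(s * -y₁) = -(-y₁) * 2 log q ≤ 2*(-y₁)*(q⁻¹ - 1) and (-y₁)*q⁻¹ = q/s
      have hyq : (-y₁) * q⁻¹ = q / s := by
        have : (-y₁) = q ^ 2 / s := by
          field_simp at hq2 ⊢
          linarith [hq2]
        rw [this]
        field_simp
      have hbound : y₁ * Real.log (s * -y₁) ≤ 2 * (q / s) - 2 * (-y₁) := by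
        rw [hlogsy]
        have h5 : y₁ * (2 * Real.log q) ≤ y₁ * (2 * (1 - q⁻¹)) := by
          apply mul_le_mul_of_nonpos_left _ hn'.le
          linarith
        calc y₁ * (2 * Real.log q) ≤ y₁ * (2 * (1 - q⁻¹)) := h5
          _ = 2 * ((-y₁) * q⁻¹) - 2 * (-y₁) := by ring
          _ = 2 * (q / s) - 2 * (-y₁) := by rw [hyq]
      -- q < s * x₂ / 4
      have hqlt : q < s * x₂ / 4 := by
        have hq2' : q ^ 2 < s * ρ := by
          rw [hq2]
          have h9 : -y₁ < ρ := by linarith [hy1'.1]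
          nlinarith
        have e1 : s * ρ ≤ s * (s * x₂ ^ 2 / 17) := mul_le_mul_of_nonneg_left hρ3 hs.le
        nlinarith [hq2', e1, sq_nonneg (q - s * x₂ / 4), hq0.le, mul_pos hs hx₂]
      have hqs : q / s < x₂ / 4 := by
        rw [div_lt_div_iff₀ hs (by norm_num : (0:ℝ) < 4)]
        linarith
      linarith
  · -- positive case
    set V : Set (ℝ × ℝ) := {y | 0 < y.1} ∩
      (fun y : ℝ × ℝ => y.2 - y.1 * Real.log (t * y.1)) ⁻¹' (Ioi 0) with hV
    have hVopen : IsOpen V := by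
      apply ContinuousOn.isOpen_inter_preimage ?_ (isOpen_lt continuous_const continuous_fst)
        isOpen_Ioi
      intro y hy
      apply ContinuousAt.continuousWithinAt
      have hypos : 0 < y.1 := hy
      have hne : t * y.1 ≠ 0 := ne_of_gt (by nlinarith)
      exact (continuous_snd.continuousAt).sub
        ((continuous_fst.continuousAt).mul
          (((continuous_const.mul continuous_fst).continuousAt).log hne))
    have hmemV : (x₁, x₂) ∈ V := by
      constructor
      · exact h
      · simp only [mem_preimage, mem_Ioi]
        have := h1 h
        linarith
    apply mem_of_superset (hVopen.mem_nhds hmemV)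
    rintro ⟨y₁, y₂⟩ ⟨hy1, hy2⟩
    simp only [mem_setOf_eq, mem_preimage, mem_Ioi] at hy1 hy2
    refine ⟨fun _ => by simpa using by linarith, fun hp => absurd hp (by simp; linarith),
      fun hp => absurd hp (by simp; linarith)⟩

/-- The tube domains over the two halves `B_{s,t} ∩ {x₁ < c}` and
`B_{s,t} ∩ {x₁ > c}` are Kobayashi-hyperbolic. -/
theorem tubeB_halves_hyperbolic (s t : ℝ) (hs : 0 < s) (ht : 0 < t) (c : ℝ) :
    IsHyperbolic (tube (setB s t ∩ {x : ℝ × ℝ | x.1 < c})) ∧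
    IsHyperbolic (tube (setB s t ∩ {x : ℝ × ℝ | c < x.1})) := by
  constructor
  · have hopen : IsOpen (setB s t ∩ {x : ℝ × ℝ | x.1 < c}) :=
      (isOpen_setB hs ht).inter (isOpen_lt continuous_fst continuous_const)
    have hc : ∀ x ∈ setB s t ∩ {x : ℝ × ℝ | x.1 < c}, (1:ℝ) * x.1 < c := by
      rintro x ⟨hxB, hxc⟩
      have : x.1 < c := hxc
      linarith
    have hfib : ∀ a : ℝ, ∃ m : ℝ, ∀ x ∈ setB s t ∩ {x : ℝ × ℝ | x.1 < c},
        a < (1:ℝ) * x.1 → m < x.2 := by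
      intro a
      refine ⟨-(1 / (Real.exp 1 * t)) - s * (max |a| |c|) ^ 2 - 1, ?_⟩
      rintro x ⟨hxB, hxc⟩ ha
      rw [one_mul] at ha
      have hxc' : x.1 < c := hxc
      apply setB_fiber hs ht hxB
      rw [abs_le]
      exact ⟨by linarith [neg_abs_le a, le_max_left |a| |c|],
        by linarith [le_abs_self c, le_max_right |a| |c|]⟩
    exact core hopen (Or.inl rfl) hc hfib
  · have hopen : IsOpen (setB s t ∩ {x : ℝ × ℝ | c < x.1}) :=
      (isOpen_setB hs ht).inter (isOpen_lt continuous_const continuous_fst)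
    have hc : ∀ x ∈ setB s t ∩ {x : ℝ × ℝ | c < x.1}, (-1:ℝ) * x.1 < -c := by
      rintro x ⟨hxB, hxc⟩
      have : c < x.1 := hxc
      linarith
    have hfib : ∀ a : ℝ, ∃ m : ℝ, ∀ x ∈ setB s t ∩ {x : ℝ × ℝ | c < x.1},
        a < (-1:ℝ) * x.1 → m < x.2 := by
      intro a
      refine ⟨-(1 / (Real.exp 1 * t)) - s * (max |a| |c|) ^ 2 - 1, ?_⟩
      rintro x ⟨hxB, hxc⟩ ha
      have hxc' : c < x.1 := hxc
      apply setB_fiber hs ht hxB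
      rw [abs_le]
      exact ⟨by linarith [neg_abs_le c, le_max_right |a| |c|],
        by linarith [neg_abs_le a, le_max_left |a| |c|]⟩
    exact core hopen (Or.inr rfl) hc hfib
end
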